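/- arXiv:1302.4661 — 9 statements merged into one kernel-verified Lean document; each statement's English description precedes it below -/
import Mathlib

section
/- Let X and Y be Banach spaces, T : X → Y a bounded linear operator, and Z a closed linear subspace of X. If the image T[Z] is closed and complemented in Y, and Z ∩ ker(T) is complemented in X, then Z is complemented in X. -/
open Filter Topology
open scoped ZeroAtInfty

noncomputable section

/-- `E` is an extension operator for the closed set `F` in `K`. -/
def IsExtensionOperator {K : Type*} [TopologicalSpace K] (F : Set K)
    (E : C(↥F, ℝ) →L[ℝ] C(K, ℝ)) : Prop :=
  ∀ f : C(↥F, ℝ), (E f).restrict F = f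

/-- `F` admits an extension operator in `K`. -/
def HasExtensionOperator {K : Type*} [TopologicalSpace K] (F : Set K) : Prop :=
  ∃ E : C(↥F, ℝ) →L[ℝ] C(K, ℝ), IsExtensionOperator F E

/-- `K` has the extension property. -/
def HasExtensionProperty (K : Type*) [TopologicalSpace K] : Prop :=
  ∀ F : Set K, F.Nonempty → IsClosed F → HasExtensionOperator F

/-- `F` admits a regular extension operator in `K`. -/
def HasRegularExtensionOperator {K : Type*} [TopologicalSpace K] [CompactSpace K]
    (F : Set K) (hF : IsClosed F) : Prop :=
  haveI : CompactSpace ↥F := isCompact_iff_compactSpace.mp hF.isCompact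
  ∃ E : C(↥F, ℝ) →L[ℝ] C(K, ℝ), IsExtensionOperator F E ∧ ‖E‖ ≤ 1 ∧ E 1 = 1

/-- `K` has the regular extension property. -/
def HasRegularExtensionProperty (K : Type*) [TopologicalSpace K] [CompactSpace K] : Prop :=
  ∀ F : Set K, F.Nonempty → ∀ hF : IsClosed F, HasRegularExtensionOperator F hF

/-- The submodule `C(K|G)` of `C(K, ℝ)` of functions vanishing on `G`. -/
def vanishingSubmodule {K : Type*} [TopologicalSpace K] (G : Set K) :
    Submodule ℝ C(K, ℝ) where
  carrier := {f | ∀ x ∈ G, f x = 0}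
  add_mem' := by intro f g hf hg x hx; simp [hf x hx, hg x hx]
  zero_mem' := by intro x hx; simp
  smul_mem' := by intro c f hf x hx; simp [hf x hx]

/-- The canonical basis vector of `c₀(I)`: the characteristic function of `{i}`. -/
def c0Single {I : Type*} [TopologicalSpace I] [DiscreteTopology I] (i : I) : C₀(I, ℝ) :=
  letI := Classical.decEq I
  { toFun := fun j => if j = i then (1 : ℝ) else 0
    continuous_toFun := continuous_of_discreteTopology
    zero_at_infty' := by
      have h : (fun j => if j = i then (1 : ℝ) else 0) =ᶠ[Filter.cocompact I] (fun _ => 0) := by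
        filter_upwards [Filter.mem_cocompact.mpr ⟨{i}, isCompact_singleton, subset_rfl⟩] with j hj
        simp only [Set.mem_compl_iff, Set.mem_singleton_iff] at hj
        simp [hj]
      exact Filter.Tendsto.congr' h.symm tendsto_const_nhds }

/-- `X` satisfies the countable chain condition. -/
def CountableChainCondition (X : Type*) [TopologicalSpace X] : Prop :=
  ∀ 𝒰 : Set (Set X), (∀ U ∈ 𝒰, IsOpen U ∧ U.Nonempty) → 𝒰.Pairwise Disjoint → 𝒰.Countable

theorem stmt0 {X Y : Type*} [NormedAddCommGroup X] [NormedSpace ℝ X] [CompleteSpace X]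
    [NormedAddCommGroup Y] [NormedSpace ℝ Y] [CompleteSpace Y]
    (T : X →L[ℝ] Y) (Z : Submodule ℝ X) (hZ : IsClosed (Z : Set X))
    (hTZ_closed : IsClosed ((Z.map (T : X →ₗ[ℝ] Y) : Submodule ℝ Y) : Set Y))
    (hTZ_compl : (Z.map (T : X →ₗ[ℝ] Y)).ClosedComplemented)
    (hker_compl : (Z ⊓ LinearMap.ker (T : X →ₗ[ℝ] Y)).ClosedComplemented) :
    Z.ClosedComplemented := by
  classical
  obtain ⟨P, hP⟩ := hTZ_compl
  obtain ⟨Q, hQ⟩ := hker_compl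
  set Q' : X →L[ℝ] X := (Z ⊓ LinearMap.ker (T : X →ₗ[ℝ] Y)).subtypeL.comp Q with hQ'def
  have hQ'mem : ∀ x : X, Q' x ∈ Z ⊓ LinearMap.ker (T : X →ₗ[ℝ] Y) := fun x => (Q x).2
  have hQ'fix : ∀ x ∈ Z ⊓ LinearMap.ker (T : X →ₗ[ℝ] Y), Q' x = x := by
    intro x hx
    have := hQ ⟨x, hx⟩
    simpa [hQ'def] using congrArg (Subtype.val) this
  set W : Submodule ℝ X := Z ⊓ LinearMap.ker Q'.toLinearMap with hWdef
  have hWclosed : IsClosed (W : Set X) := by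
    rw [hWdef, Submodule.coe_inf]
    exact hZ.inter (ContinuousLinearMap.isClosed_ker Q')
  haveI : CompleteSpace ↥W := hWclosed.completeSpace_coe
  haveI : CompleteSpace ↥(Z.map (T : X →ₗ[ℝ] Y)) := hTZ_closed.completeSpace_coe
  set Tw : ↥W →L[ℝ] ↥(Z.map (T : X →ₗ[ℝ] Y)) := P.comp (T.comp W.subtypeL) with hTwdef
  have hTwcoe : ∀ w : ↥W, ((Tw w : ↥(Z.map (T : X →ₗ[ℝ] Y))) : Y) = T (w : X) := by
    intro w
    have hmem : T (w : X) ∈ Z.map (T : X →ₗ[ℝ] Y) := ⟨(w : X), w.2.1, rfl⟩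
    have := hP ⟨T (w : X), hmem⟩
    simpa [hTwdef] using congrArg (Subtype.val) this
  have hinj : LinearMap.ker Tw.toLinearMap = ⊥ := by
    rw [LinearMap.ker_eq_bot']
    intro w hw
    have hT0 : T (w : X) = 0 := by
      rw [← hTwcoe w, show Tw w = 0 from hw]; rfl
    have hwN : (w : X) ∈ Z ⊓ LinearMap.ker (T : X →ₗ[ℝ] Y) := ⟨w.2.1, hT0⟩
    have h1 : Q' (w : X) = (w : X) := hQ'fix _ hwN
    have h2 : Q' (w : X) = 0 := w.2.2
    ext
    rw [← h1, h2]
    rfl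
  have hsurj : LinearMap.range Tw.toLinearMap = ⊤ := by
    rw [LinearMap.range_eq_top]
    rintro ⟨y, z, hz, rfl⟩
    have hQz : Q' z ∈ Z ⊓ LinearMap.ker (T : X →ₗ[ℝ] Y) := hQ'mem z
    have hwZ : z - Q' z ∈ Z := Z.sub_mem hz hQz.1
    have hwker : z - Q' z ∈ LinearMap.ker Q'.toLinearMap := by
      have h : Q' (Q' z) = Q' z := hQ'fix _ hQz
      simp [LinearMap.mem_ker, map_sub, h]
    refine ⟨⟨z - Q' z, hwZ, hwker⟩, ?_⟩
    ext
    erw [hTwcoe]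
    have h0 : T (Q' z) = 0 := hQz.2
    simp [map_sub, h0]
  set S : ↥(Z.map (T : X →ₗ[ℝ] Y)) ≃L[ℝ] ↥W :=
    (ContinuousLinearEquiv.ofBijective Tw hinj hsurj).symm with hSdef
  have hS : ∀ w : ↥W, S (Tw w) = w := fun w =>
    (ContinuousLinearEquiv.ofBijective Tw hinj hsurj).symm_apply_apply w
  set g : X →L[ℝ] X :=
    W.subtypeL.comp ((S : ↥(Z.map (T : X →ₗ[ℝ] Y)) →L[ℝ] ↥W).comp (P.comp T)) + Q' with hgdef
  have hgmem : ∀ x : X, g x ∈ Z := by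
    intro x
    exact Z.add_mem (S (P (T x))).2.1 (hQ'mem x).1
  have hgfix : ∀ z ∈ Z, g z = z := by
    intro z hz
    have hQz : Q' z ∈ Z ⊓ LinearMap.ker (T : X →ₗ[ℝ] Y) := hQ'mem z
    have hwZ : z - Q' z ∈ Z := Z.sub_mem hz hQz.1
    have hwker : z - Q' z ∈ LinearMap.ker Q'.toLinearMap := by
      have h : Q' (Q' z) = Q' z := hQ'fix _ hQz
      simp [LinearMap.mem_ker, map_sub, h]
    have hTweq : Tw ⟨z - Q' z, hwZ, hwker⟩ = P (T z) := by
      ext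
      rw [hTwcoe]
      have h0 : T (Q' z) = 0 := hQz.2
      have hmem : T z ∈ Z.map (T : X →ₗ[ℝ] Y) := ⟨z, hz, rfl⟩
      have hcoe : ((P (T z) : ↥(Z.map (T : X →ₗ[ℝ] Y))) : Y) = T z :=
        congrArg Subtype.val (hP ⟨T z, hmem⟩)
      simp [map_sub, h0, hcoe]
    have hSval : S (P (T z)) = ⟨z - Q' z, hwZ, hwker⟩ := by
      rw [← hTweq]; exact hS _
    show (↑(S (P (T z))) : X) + Q' z = z
    rw [hSval]
    simp
  refine ⟨g.codRestrict Z hgmem, fun x => ?_⟩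
  ext
  exact hgfix x x.2
end
end

section
/- Let K be a compact Hausdorff space, I a set, and S : c0(I) → C(K) a linear isometric embedding. For each i ∈ I let ξ_i ∈ C(K) be the image under S of the i-th canonical basis vector, and set G = ⋂_{i∈I} ξ_i⁻¹(0). Then the image of S is complemented in C(K|G). -/
open Filter Topology
open scoped ZeroAtInfty

noncomputable section

namespace StmtHelper
open ZeroAtInftyContinuousMap
variable {I : Type*} [TopologicalSpace I] [DiscreteTopology I]

lemma c0Single_apply_self (i : I) : c0Single i i = 1 := by
  simp [c0Single]

lemma c0Single_apply_ne {i j : I} (h : j ≠ i) : c0Single i j = 0 := by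
  simp [c0Single, h]

lemma abs_coord_le (f : C₀(I, ℝ)) (i : I) : |f i| ≤ ‖f‖ := by
  rw [← norm_toBCF_eq_norm]
  exact f.toBCF.norm_coe_le_norm i

lemma c0_norm_le {f : C₀(I, ℝ)} {C : ℝ} (h0 : 0 ≤ C) (h : ∀ i, |f i| ≤ C) : ‖f‖ ≤ C := by
  rw [← norm_toBCF_eq_norm]
  exact (BoundedContinuousFunction.norm_le h0).mpr h

lemma norm_c0Single (i : I) : ‖c0Single i‖ = 1 := by
  refine le_antisymm (c0_norm_le zero_le_one ?_) ?_
  · intro j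
    rcases eq_or_ne j i with rfl | h
    · simp [c0Single_apply_self]
    · simp [c0Single_apply_ne h]
  · have := abs_coord_le (c0Single i) i
    rwa [c0Single_apply_self, abs_one] at this

lemma c0_sum_apply {ι : Type*} (s : Finset ι) (g : ι → C₀(I, ℝ)) (j : I) :
    (∑ i ∈ s, g i) j = ∑ i ∈ s, g i j := by
  classical
  induction s using Finset.induction_on with
  | empty => rfl
  | insert _ _ h ih => rw [Finset.sum_insert h, Finset.sum_insert h, ← ih]; rfl

lemma approx (f : C₀(I, ℝ)) {ε : ℝ} (hε : 0 < ε) :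
    ∃ s : Finset I, ‖f - ∑ i ∈ s, f i • c0Single i‖ ≤ ε := by
  classical
  have h := f.zero_at_infty'
  rw [cocompact_eq_cofinite] at h
  have hfin : {j | ε ≤ |f j|}.Finite := by
    have h2 : ∀ᶠ j in cofinite, |f j| < ε := by
      have := Metric.tendsto_nhds.mp h ε hε
      filter_upwards [this] with j hj
      simpa [Real.dist_eq] using hj
    have := Filter.eventually_cofinite.mp h2
    exact this.subset (fun j hj => by simpa using hj)
  refine ⟨hfin.toFinset, c0_norm_le hε.le ?_⟩
  intro j
  have hval : (f - ∑ i ∈ hfin.toFinset, f i • c0Single i) j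
      = f j - ∑ i ∈ hfin.toFinset, f i * c0Single i j := by
    have : (f - ∑ i ∈ hfin.toFinset, f i • c0Single i) j
        = f j - (∑ i ∈ hfin.toFinset, f i • c0Single i) j := rfl
    rw [this, c0_sum_apply]
    simp
  by_cases hj : j ∈ hfin.toFinset
  · have : ∑ i ∈ hfin.toFinset, f i * c0Single i j = f j := by
      rw [Finset.sum_eq_single j]
      · rw [c0Single_apply_self]; ring
      · intro i _ hne; rw [c0Single_apply_ne (Ne.symm hne)]; ring
      · intro h; exact absurd hj h
    rw [hval, this, sub_self, abs_zero]; exact hε.le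
  · have : ∑ i ∈ hfin.toFinset, f i * c0Single i j = 0 := by
      apply Finset.sum_eq_zero
      intro i hi
      have : j ≠ i := by rintro rfl; exact hj hi
      rw [c0Single_apply_ne this]; ring
    rw [hval, this, sub_zero]
    have : ¬ ε ≤ |f j| := by
      intro hc
      exact hj (hfin.mem_toFinset.mpr hc)
    linarith [abs_nonneg (f j)]

lemma clm_eq_zero (φ : C₀(I, ℝ) →L[ℝ] ℝ) (h : ∀ i, φ (c0Single i) = 0) (f : C₀(I, ℝ)) :
    φ f = 0 := by
  have key : ∀ ε : ℝ, 0 < ε → |φ f| ≤ ‖φ‖ * ε := by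
    intro ε hε
    obtain ⟨s, hs⟩ := approx f hε
    have hφ : φ f = φ (f - ∑ i ∈ s, f i • c0Single i) := by
      rw [map_sub, map_sum]
      have : ∑ i ∈ s, φ (f i • c0Single i) = 0 := by
        apply Finset.sum_eq_zero
        intro i _
        rw [map_smul, h i, smul_zero]
      rw [this, sub_zero]
    rw [hφ]
    calc |φ (f - ∑ i ∈ s, f i • c0Single i)|
        ≤ ‖φ‖ * ‖f - ∑ i ∈ s, f i • c0Single i‖ := φ.le_opNorm _
      _ ≤ ‖φ‖ * ε := by
          exact mul_le_mul_of_nonneg_left hs (norm_nonneg φ)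
  by_contra hne
  have hpos : 0 < |φ f| := abs_pos.mpr hne
  have := key (|φ f| / (‖φ‖ + 1)) (by positivity)
  have hlt : ‖φ‖ * (|φ f| / (‖φ‖ + 1)) < |φ f| := by
    rw [div_eq_inv_mul, ← mul_assoc]
    have h1 : ‖φ‖ * (‖φ‖ + 1)⁻¹ < 1 := by
      rw [mul_inv_lt_iff₀ (by positivity), one_mul]
      linarith [norm_nonneg φ]
    calc ‖φ‖ * (‖φ‖ + 1)⁻¹ * |φ f| < 1 * |φ f| := by
          exact mul_lt_mul_of_pos_right h1 hpos
      _ = |φ f| := one_mul _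
  linarith

/-- coordinate functional -/
def coordCLM (i : I) : C₀(I, ℝ) →L[ℝ] ℝ :=
  LinearMap.mkContinuous
    { toFun := fun f => f i
      map_add' := fun f g => rfl
      map_smul' := fun c f => rfl } 1
    (fun f => by simpa using abs_coord_le f i)

@[simp] lemma coordCLM_apply (i : I) (f : C₀(I, ℝ)) : coordCLM i f = f i := rfl

end StmtHelper

set_option maxHeartbeats 1000000 in
open StmtHelper in
theorem stmt1 {K : Type*} [TopologicalSpace K] [CompactSpace K] [T2Space K]
    {I : Type*} [TopologicalSpace I] [DiscreteTopology I]
    (S : C₀(I, ℝ) →ₗᵢ[ℝ] C(K, ℝ))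
    (G : Set K) (hG : G = ⋂ i : I, (fun x => S (c0Single i) x) ⁻¹' {0}) :
    LinearMap.range S.toLinearMap ≤ vanishingSubmodule G ∧
      (Submodule.comap (vanishingSubmodule G).subtype
        (LinearMap.range S.toLinearMap)).ClosedComplemented := by
  classical
  set ξ : I → C(K, ℝ) := fun i => S (c0Single i) with hξ
  have hval : ∀ x ∈ G, ∀ i, ξ i x = 0 := by
    intro x hx i
    rw [hG, Set.mem_iInter] at hx
    exact hx i
  -- Part A
  have hrange : ∀ f : C₀(I, ℝ), ∀ x ∈ G, S f x = 0 := by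
    intro f x hx
    exact clm_eq_zero ((ContinuousMap.evalCLM ℝ x).comp S.toContinuousLinearMap)
      (fun i => hval x hx i) f
  have hA : LinearMap.range S.toLinearMap ≤ vanishingSubmodule G := by
    rintro _ ⟨f, rfl⟩ x hx
    exact hrange f x hx
  refine ⟨hA, ?_⟩
  -- key inequality
  have hSapp : ∀ (s : Finset I) (a : I → ℝ) (x : K),
      S (∑ i ∈ s, a i • c0Single i) x = ∑ i ∈ s, a i * ξ i x := by
    intro s a x
    rw [map_sum]
    rw [ContinuousMap.sum_apply]
    apply Finset.sum_congr rfl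
    intro i _
    rw [map_smul]
    rfl
  have hsum : ∀ (x : K) (s : Finset I) (a : I → ℝ), (∀ i, |a i| ≤ 1) →
      |∑ i ∈ s, a i * ξ i x| ≤ 1 := by
    intro x s a ha
    set f : C₀(I, ℝ) := ∑ i ∈ s, a i • c0Single i with hf
    have hfn : ‖f‖ ≤ 1 := by
      apply c0_norm_le zero_le_one
      intro j
      rw [hf, c0_sum_apply]
      by_cases hj : j ∈ s
      · have : ∑ i ∈ s, (a i • c0Single i) j = a j := by
          rw [Finset.sum_eq_single j]
          · show a j • c0Single j j = a j
            rw [c0Single_apply_self]; simp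
          · intro i _ hne
            show a i • c0Single i j = 0
            rw [c0Single_apply_ne (Ne.symm hne)]; simp
          · intro h; exact absurd hj h
        rw [this]; exact ha j
      · have : ∑ i ∈ s, (a i • c0Single i) j = 0 := by
          apply Finset.sum_eq_zero
          intro i hi
          have hne : j ≠ i := by rintro rfl; exact hj hi
          show a i • c0Single i j = 0
          rw [c0Single_apply_ne hne]; simp
        rw [this]; simp
    have h1 : |S f x| ≤ ‖S f‖ := by
      have := (S f).norm_coe_le_norm x
      simpa [Real.norm_eq_abs] using this
    rw [← hSapp s a x]
    calc |S f x| ≤ ‖S f‖ := h1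
      _ = ‖f‖ := S.norm_map f
      _ ≤ 1 := hfn
  have habs : ∀ (x : K) (s : Finset I), ∑ i ∈ s, |ξ i x| ≤ 1 := by
    intro x s
    have h := hsum x s (fun i => if 0 ≤ ξ i x then 1 else -1)
      (by intro i; split <;> simp)
    have heq : ∑ i ∈ s, (if 0 ≤ ξ i x then (1:ℝ) else -1) * ξ i x = ∑ i ∈ s, |ξ i x| := by
      apply Finset.sum_congr rfl
      intro i _
      by_cases h' : 0 ≤ ξ i x
      · rw [if_pos h', abs_of_nonneg h', one_mul]
      · rw [if_neg h', abs_of_neg (lt_of_not_ge h')]; ring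
    rw [heq] at h
    exact le_trans (le_abs_self _) h
  -- norming points
  have hξnorm : ∀ i, ‖ξ i‖ = 1 := by
    intro i
    rw [hξ]
    show ‖S (c0Single i)‖ = 1
    rw [S.norm_map, norm_c0Single]
  have hex : ∀ i : I, ∃ x : K, |ξ i x| = 1 := by
    intro i
    have hne : Nonempty K := by
      by_contra h
      rw [not_nonempty_iff] at h
      have hz : ξ i = 0 := by ext y; exact h.elim y
      have h2 := hξnorm i
      rw [hz, norm_zero] at h2
      exact one_ne_zero h2.symm
    obtain ⟨x, -, hx⟩ := isCompact_univ.exists_isMaxOn Set.univ_nonempty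
      ((continuous_abs.comp (ξ i).continuous).continuousOn)
    refine ⟨x, le_antisymm ?_ ?_⟩
    · have := (ξ i).norm_coe_le_norm x
      rw [hξnorm i] at this
      simpa [Real.norm_eq_abs] using this
    · rw [← hξnorm i]
      apply ((ξ i).norm_le (abs_nonneg _)).mpr
      intro y
      have := hx (Set.mem_univ y)
      simpa [Real.norm_eq_abs] using this
  choose x hx using hex
  set ε : I → ℝ := fun i => ξ i (x i) with hεdef
  have hεabs : ∀ i, |ε i| = 1 := hx
  have hdelta : ∀ i j, j ≠ i → ξ j (x i) = 0 := by
    intro i j hne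
    have h2 := habs (x i) {i, j}
    rw [Finset.sum_insert (by simpa using Ne.symm hne), Finset.sum_singleton] at h2
    have := hεabs i
    have h3 : |ξ j (x i)| ≤ 0 := by
      have : |ξ i (x i)| = 1 := hεabs i
      linarith
    rw [← abs_eq_zero]
    linarith [abs_nonneg (ξ j (x i))]
  have hxinj : Function.Injective x := by
    intro i j hij
    by_contra hne
    have h1 : ξ i (x j) = 0 := hdelta j i hne
    rw [← hij] at h1
    have := hεabs i
    rw [hεdef] at this
    simp only at this
    rw [h1, abs_zero] at this
    exact one_ne_zero this.symm
  -- key c0 fact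
  have hkey : ∀ g : C(K, ℝ), (∀ y ∈ G, g y = 0) →
      Tendsto (fun i => g (x i)) cofinite (𝓝 0) := by
    intro g hg
    rw [Metric.tendsto_nhds]
    intro δ hδ
    rw [eventually_cofinite]
    by_contra hinf
    set J := {i | ¬ dist (g (x i)) 0 < δ} with hJ
    have hJinf : J.Infinite := hinf
    have hne : (cofinite ⊓ 𝓟 J).NeBot := by
      rw [inf_principal_neBot_iff]
      intro U hU
      have : (Uᶜ).Finite := hU
      have := hJinf.diff this
      obtain ⟨i, hi⟩ := this.nonempty
      exact ⟨i, by simpa using hi.2, hi.1⟩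
    have hmapne : (Filter.map x (cofinite ⊓ 𝓟 J)).NeBot := Filter.NeBot.map hne x
    obtain ⟨y, -, hy⟩ := isCompact_univ.exists_clusterPt
      (f := Filter.map x (cofinite ⊓ 𝓟 J)) (le_principal_iff.mpr Filter.univ_mem)
    have hclosed : ∀ A : Set K, IsClosed A → A ∈ Filter.map x (cofinite ⊓ 𝓟 J) → y ∈ A := by
      intro A hcA hmem
      have h1 : ClusterPt y (𝓟 A) := hy.mono (le_principal_iff.mpr hmem)
      rw [← mem_closure_iff_clusterPt] at h1
      rwa [hcA.closure_eq] at h1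
    have hyG : y ∈ G := by
      rw [hG, Set.mem_iInter]
      intro j
      have : y ∈ {z | ξ j z = 0} := by
        apply hclosed _ (isClosed_eq (ξ j).continuous continuous_const)
        rw [Filter.mem_map]
        apply Filter.mem_of_superset
          (Filter.inter_mem (Filter.mem_inf_of_left (Set.finite_singleton j).compl_mem_cofinite)
            (Filter.mem_inf_of_right (Filter.mem_principal_self J)))
        rintro i ⟨hi1, hi2⟩
        simp only [Set.mem_compl_iff, Set.mem_singleton_iff] at hi1
        exact hdelta i j (Ne.symm hi1)
      exact this
    have hygδ : δ ≤ |g y| := by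
      have : y ∈ {z | δ ≤ |g z|} := by
        apply hclosed _ (isClosed_le continuous_const (continuous_abs.comp g.continuous))
        rw [Filter.mem_map]
        apply Filter.mem_of_superset (Filter.mem_inf_of_right (Filter.mem_principal_self J))
        intro i hi
        rw [hJ, Set.mem_setOf_eq, Real.dist_eq, sub_zero, not_lt] at hi
        exact hi
      exact this
    rw [hg y hyG, abs_zero] at hygδ
    linarith
  -- define the operator V on the vanishing submodule
  set Z := vanishingSubmodule G with hZ
  have hZmem : ∀ g : ↥Z, ∀ y ∈ G, (g : C(K, ℝ)) y = 0 := fun g => g.2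
  have hVs : ∀ g : ↥Z, Tendsto (fun i => ε i * (g : C(K, ℝ)) (x i)) (cocompact I) (𝓝 0) := by
    intro g
    rw [cocompact_eq_cofinite]
    have h1 : Tendsto (fun i => |(g : C(K, ℝ)) (x i)|) cofinite (𝓝 0) := by
      have := (hkey (g : C(K, ℝ)) (hZmem g)).abs
      simpa using this
    rw [show (0 : ℝ) = |0| from (abs_zero).symm] at h1
    apply squeeze_zero_norm _ (by simpa using h1)
    intro i
    rw [Real.norm_eq_abs, abs_mul, hεabs i, one_mul]
  set Vlin : ↥Z →ₗ[ℝ] C₀(I, ℝ) :=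
    { toFun := fun g =>
        { toFun := fun i => ε i * (g : C(K, ℝ)) (x i)
          continuous_toFun := continuous_of_discreteTopology
          zero_at_infty' := hVs g }
      map_add' := by
        intro g h
        ext i
        show ε i * ((g + h : ↥Z) : C(K, ℝ)) (x i) = ε i * (g : C(K,ℝ)) (x i) + ε i * (h : C(K,ℝ)) (x i)
        rw [Submodule.coe_add, ContinuousMap.add_apply]
        ring
      map_smul' := by
        intro c g
        ext i
        show ε i * ((c • g : ↥Z) : C(K, ℝ)) (x i) = c * (ε i * (g : C(K,ℝ)) (x i))
        rw [Submodule.coe_smul, ContinuousMap.smul_apply, smul_eq_mul]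
        ring } with hVlin
  have hVlin_apply : ∀ (g : ↥Z) (i : I), Vlin g i = ε i * (g : C(K, ℝ)) (x i) := fun g i => rfl
  have hVbound : ∀ g : ↥Z, ‖Vlin g‖ ≤ 1 * ‖g‖ := by
    intro g
    rw [one_mul]
    apply c0_norm_le (norm_nonneg g)
    intro i
    rw [hVlin_apply, abs_mul, hεabs i, one_mul]
    have := ((g : C(K, ℝ))).norm_coe_le_norm (x i)
    simpa [Real.norm_eq_abs] using this
  set V : ↥Z →L[ℝ] C₀(I, ℝ) := Vlin.mkContinuous 1 hVbound with hV
  have hV_apply : ∀ (g : ↥Z) (i : I), V g i = ε i * (g : C(K, ℝ)) (x i) := fun g i => rfl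
  set T1 : ↥Z →L[ℝ] C(K, ℝ) := S.toContinuousLinearMap.comp V with hT1
  have hT1mem : ∀ g : ↥Z, T1 g ∈ Z := by
    intro g
    exact hA ⟨V g, rfl⟩
  set T2 : ↥Z →L[ℝ] ↥Z := T1.codRestrict Z hT1mem with hT2
  have hT2mem : ∀ g : ↥Z, T2 g ∈ Submodule.comap Z.subtype (LinearMap.range S.toLinearMap) := by
    intro g
    rw [Submodule.mem_comap]
    exact ⟨V g, rfl⟩
  refine ⟨T2.codRestrict _ hT2mem, ?_⟩
  rintro ⟨g, hgmem⟩
  rw [Submodule.mem_comap] at hgmem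
  obtain ⟨f, hf⟩ := hgmem
  have hf' : S f = (g : C(K, ℝ)) := hf
  apply Subtype.ext
  apply Subtype.ext
  show S (V g) = (g : C(K, ℝ))
  rw [← hf']
  congr 1
  -- V g = f
  ext i
  rw [hV_apply]
  have hSf : ∀ h : C₀(I, ℝ), S h (x i) = ε i * h i := by
    intro h
    have hz := clm_eq_zero (((ContinuousMap.evalCLM ℝ (x i)).comp S.toContinuousLinearMap)
      - (ε i) • coordCLM i) ?_ h
    · have : S h (x i) - ε i * h i = 0 := by
        have := hz
        simpa [coordCLM_apply, smul_eq_mul] using this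
      linarith
    · intro j
      rcases eq_or_ne j i with rfl | hne
      · show S (c0Single j) (x j) - (ε j) • (coordCLM j (c0Single j)) = 0
        rw [coordCLM_apply, c0Single_apply_self, smul_eq_mul, mul_one]
        show ξ j (x j) - ε j = 0
        rw [hεdef]; ring
      · show S (c0Single j) (x i) - (ε i) • (coordCLM i (c0Single j)) = 0
        rw [coordCLM_apply, c0Single_apply_ne (Ne.symm hne), smul_eq_mul, mul_zero, sub_zero]
        exact hdelta i j hne
  have hgv : (g : C(K, ℝ)) (x i) = ε i * f i := by
    rw [← hf']; exact hSf f
  rw [hgv, ← mul_assoc]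
  have hsq : ε i * ε i = 1 := by
    rcases (abs_eq (zero_le_one)).mp (hεabs i) with h1 | h1 <;> rw [h1] <;> norm_num
  rw [hsq, one_mul]
end
end

section
/- Let K be a compact Hausdorff space having the extension property, let L be a compact Hausdorff scattered space of finite height, and let F be a closed subset of L. Then every isometric copy of C(L|F) in C(K) is complemented; that is, for every linear isometric embedding S : C(L|F) → C(K), the range of S is complemented in C(K). -/
open Filter Topology
open scoped ZeroAtInfty

noncomputable section

lemma mem_vanishingSubmodule {K : Type*} [TopologicalSpace K] {G : Set K} {f : C(K, ℝ)} :
    f ∈ vanishingSubmodule G ↔ ∀ x ∈ G, f x = 0 := Iff.rfl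

example {K : Type*} [TopologicalSpace K] [CompactSpace K] {G : Set K}
    (f : ↥(vanishingSubmodule G)) : ‖f‖ = ‖(f : C(K,ℝ))‖ := rfl

/-- Precomposition with a continuous map, as a continuous linear map. -/
def precompCLM {X Y : Type*} [TopologicalSpace X] [CompactSpace X] [TopologicalSpace Y]
    [CompactSpace Y] (g : C(X, Y)) : C(Y, ℝ) →L[ℝ] C(X, ℝ) :=
  LinearMap.mkContinuous
    { toFun := fun f => f.comp g
      map_add' := fun f₁ f₂ => by ext x; simp
      map_smul' := fun c f => by ext x; simp }
    1 (fun f => by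
      rw [one_mul]
      refine (ContinuousMap.norm_le _ (norm_nonneg f)).2 fun x => ?_
      exact f.norm_coe_le_norm (g x))

@[simp] lemma precompCLM_apply {X Y : Type*} [TopologicalSpace X] [CompactSpace X]
    [TopologicalSpace Y] [CompactSpace Y] (g : C(X, Y)) (f : C(Y, ℝ)) (x : X) :
    precompCLM g f x = f (g x) := rfl

lemma norm_precompCLM_apply_le {X Y : Type*} [TopologicalSpace X] [CompactSpace X]
    [TopologicalSpace Y] [CompactSpace Y] (g : C(X, Y)) (f : C(Y, ℝ)) :
    ‖precompCLM g f‖ ≤ ‖f‖ := by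
  refine (ContinuousMap.norm_le _ (norm_nonneg f)).2 fun x => f.norm_coe_le_norm (g x)

/-- The extension property passes to closed subspaces. -/
lemma HasExtensionProperty.subtype {K : Type*} [TopologicalSpace K] [CompactSpace K]
    [T2Space K] (hK : HasExtensionProperty K) {B : Set K} (hB : IsClosed B) :
    HasExtensionProperty ↥B := by
  haveI : CompactSpace ↥B := isCompact_iff_compactSpace.mp hB.isCompact
  intro F₀ hne hcl
  have hcl' : IsClosed (Subtype.val '' F₀ : Set K) := hB.isClosedMap_subtype_val _ hcl
  haveI : CompactSpace ↥(Subtype.val '' F₀ : Set K) :=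
    isCompact_iff_compactSpace.mp hcl'.isCompact
  haveI : CompactSpace ↥F₀ := isCompact_iff_compactSpace.mp hcl.isCompact
  obtain ⟨E₁, hE₁⟩ := hK _ (hne.image _) hcl'
  have hsubB : ∀ q : K, q ∈ Subtype.val '' F₀ → q ∈ B := by
    rintro q ⟨a, _, rfl⟩; exact a.2
  have hsubF : ∀ (q : K) (hq : q ∈ Subtype.val '' F₀), (⟨q, hsubB q hq⟩ : ↥B) ∈ F₀ := by
    rintro q ⟨a, ha, rfl⟩; simpa using ha
  set ψ : C(↥(Subtype.val '' F₀ : Set K), ↥F₀) :=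
    ⟨fun q => ⟨⟨q.1, hsubB _ q.2⟩, hsubF _ q.2⟩,
      (continuous_subtype_val.subtype_mk _).subtype_mk _⟩ with hψ
  set ιB : C(↥B, K) := ⟨Subtype.val, continuous_subtype_val⟩ with hιB
  refine ⟨(precompCLM ιB).comp (E₁.comp (precompCLM ψ)), fun f => ?_⟩
  ext p
  have h1 := ContinuousMap.congr_fun (hE₁ (precompCLM ψ f)) ⟨p.1.1, ⟨p.1, p.2, rfl⟩⟩
  simp only [ContinuousMap.restrict_apply] at h1 ⊢
  simp only [ContinuousLinearMap.comp_apply, precompCLM_apply]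
  have h2 : ψ ⟨p.1.1, ⟨p.1, p.2, rfl⟩⟩ = p := by
    apply Subtype.ext; apply Subtype.ext; rfl
  rw [precompCLM_apply, h2] at h1
  exact h1

lemma derivedSet_subtype {L : Type*} [TopologicalSpace L] (A : Set L) (s : Set L) :
    derivedSet ((Subtype.val ⁻¹' s) : Set ↥A) ⊆ Subtype.val ⁻¹' (derivedSet s) := by
  intro p hp
  have h1 : Subtype.val '' derivedSet ((Subtype.val ⁻¹' s) : Set ↥A)
      ⊆ derivedSet (Subtype.val '' ((Subtype.val ⁻¹' s) : Set ↥A)) :=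
    Continuous.image_derivedSet continuous_subtype_val Subtype.val_injective
  have h2 := h1 ⟨p, hp, rfl⟩
  exact derivedSet_mono _ _ (Set.image_preimage_subset _ _) h2

lemma iter_derivedSet_subtype {L : Type*} [TopologicalSpace L] (A : Set L) (k : ℕ) :
    derivedSet^[k] (Set.univ : Set ↥A) ⊆ Subtype.val ⁻¹' (derivedSet^[k] A) := by
  induction k with
  | zero => exact fun p _ => p.2
  | succ k ih =>
      rw [Function.iterate_succ_apply', Function.iterate_succ_apply']
      exact (derivedSet_mono _ _ ih).trans (derivedSet_subtype _ _)

lemma punctured_nhds_bot {L : Type*} [TopologicalSpace L] {ℓ : L}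
    (h : ℓ ∉ derivedSet (Set.univ : Set L)) : 𝓝[≠] ℓ = ⊥ := by
  rw [mem_derivedSet, accPt_principal_iff_clusterPt] at h
  have he : Set.univ \ {ℓ} = ({ℓ}ᶜ : Set L) := by ext m; simp
  rw [he] at h
  by_contra hne
  exact h (Filter.neBot_iff.mpr (by rwa [nhdsWithin] at hne))

lemma finite_of_no_accPt {K : Type*} [TopologicalSpace K] [CompactSpace K] {s : Set K}
    (h : ∀ z : K, ¬ AccPt z (𝓟 s)) : s.Finite := by
  have h' : ∀ z : K, ∃ U : Set K, U ∈ 𝓝 z ∧ ∀ y ∈ U ∩ s, y = z := by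
    intro z
    have := (accPt_iff_nhds (x := z) (C := s)).not.mp (h z)
    push_neg at this
    obtain ⟨U, hU, hU2⟩ := this
    exact ⟨U, hU, hU2⟩
  choose U hU hU2 using h'
  obtain ⟨t, ht⟩ := IsCompact.elim_nhds_subcover' isCompact_univ (fun z _ => U z)
    (fun z _ => hU z)
  have hsub : s ⊆ (fun z : ↥(Set.univ : Set K) => (z : K)) '' ↑t := by
    intro y hy
    have hy2 := ht (Set.mem_univ y)
    simp only [Set.mem_iUnion] at hy2
    obtain ⟨x, hx, hyx⟩ := hy2
    exact ⟨x, hx, (hU2 _ _ ⟨hyx, hy⟩).symm⟩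
  exact Set.Finite.subset (t.finite_toSet.image _) hsub


section Rep
variable {K : Type*} {L : Type*} [TopologicalSpace K] [CompactSpace K] [T2Space K]
  [TopologicalSpace L] [CompactSpace L] [T2Space L]
  {F : Set L}

lemma vcoe_norm (v : ↥(vanishingSubmodule F)) : ‖v‖ = ‖(v : C(L,ℝ))‖ := rfl

lemma urysohn_vanishing (hF : IsClosed F) {ℓ : L} (hℓ : ℓ ∉ F) {V : Set L} (hV : IsOpen V) (hℓV : ℓ ∈ V) :
    ∃ u : C(L, ℝ), (∀ m, u m ∈ Set.Icc (0:ℝ) 1) ∧ u ℓ = 1 ∧ (∀ m ∈ F, u m = 0) ∧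
      ∀ m, m ∉ V → u m = 0 := by
  obtain ⟨f, hf0, hf1, hf01⟩ := exists_continuous_zero_one_of_isClosed
    (hF.union hV.isClosed_compl) (isClosed_singleton (x := ℓ))
    (by
      rw [Set.disjoint_singleton_right, Set.mem_union]
      rintro (h | h)
      · exact hℓ h
      · exact h hℓV)
  exact ⟨f, hf01, hf1 rfl, fun m hm => hf0 (Or.inl hm), fun m hm => hf0 (Or.inr hm)⟩

lemma peak_eq (hF : IsClosed F) (S : ↥(vanishingSubmodule F) →ₗᵢ[ℝ] C(K, ℝ)) {u v : ↥(vanishingSubmodule F)} (hu : ∀ m, (u : C(L,ℝ)) m ∈ Set.Icc (0:ℝ) 1)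
    (hv : ∀ m, (v : C(L,ℝ)) m ∈ Set.Icc (0:ℝ) 1)
    (huv : ∀ m, (u : C(L,ℝ)) m ≤ (v : C(L,ℝ)) m) {y : K} (hy : |S u y| = 1) :
    S v y = S u y := by
  have h1 : ‖S v‖ ≤ 1 := by
    rw [S.norm_map, vcoe_norm]
    refine (ContinuousMap.norm_le _ zero_le_one).2 fun m => ?_
    have := hv m
    rw [Real.norm_eq_abs, abs_le]
    exact ⟨by linarith [this.1], this.2⟩
  have h2 : ‖S ((2:ℝ) • u - v)‖ ≤ 1 := by
    rw [S.norm_map, vcoe_norm]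
    refine (ContinuousMap.norm_le _ zero_le_one).2 fun m => ?_
    have h3 := hu m; have h4 := hv m; have h5 := huv m
    have hc : ((((2:ℝ) • u - v : ↥(vanishingSubmodule F))) : C(L,ℝ)) m
        = 2 * (u : C(L,ℝ)) m - (v : C(L,ℝ)) m := by
      push_cast
      simp
    rw [Real.norm_eq_abs, hc, abs_le]
    constructor <;> nlinarith [h3.1, h3.2, h4.1, h4.2]
  have e1 : |(S v) y| ≤ 1 := by
    have := (S v).norm_coe_le_norm y
    rw [Real.norm_eq_abs] at this; linarith
  have e2 : |(S ((2:ℝ) • u - v)) y| ≤ 1 := by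
    have := (S ((2:ℝ) • u - v)).norm_coe_le_norm y
    rw [Real.norm_eq_abs] at this; linarith
  have e3 : (S ((2:ℝ) • u - v)) y = 2 * (S u) y - (S v) y := by
    rw [S.map_sub, S.map_smul]; simp
  rw [e3] at e2
  have ha : (S u y)^2 = 1 := by rw [← sq_abs, hy]; norm_num
  have hb : (S v y - S u y)^2 ≤ 0 := by
    have e1' := abs_le.mp e1
    have e2' := abs_le.mp e2
    nlinarith [e1'.1, e1'.2, e2'.1, e2'.2]
  have : S v y - S u y = 0 := by nlinarith [sq_nonneg (S v y - S u y)]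
  linarith

set_option maxHeartbeats 2000000 in
lemma exists_rep (hF : IsClosed F) (S : ↥(vanishingSubmodule F) →ₗᵢ[ℝ] C(K, ℝ)) {ℓ : L} (hℓ : ℓ ∉ F) :
    ∃ (y : K) (e : ℝ), |e| = 1 ∧
      ∀ h : ↥(vanishingSubmodule F), S h y = e * (h : C(L,ℝ)) ℓ := by
  classical
  let 𝒰 : Set C(L, ℝ) := {u | (∀ m, u m ∈ Set.Icc (0:ℝ) 1) ∧ u ℓ = 1 ∧ ∀ m ∈ F, u m = 0}
  have hmem : ∀ u ∈ 𝒰, u ∈ vanishingSubmodule F := fun u hu => hu.2.2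
  let lift : ↥𝒰 → ↥(vanishingSubmodule F) := fun u => ⟨u.1, hmem u.1 u.2⟩
  obtain ⟨u₀, hu₀⟩ : ∃ u, u ∈ 𝒰 := by
    obtain ⟨u, h1, h2, h3, -⟩ := urysohn_vanishing hF hℓ isOpen_univ (Set.mem_univ ℓ)
    exact ⟨u, h1, h2, h3⟩
  haveI : Nonempty ↥𝒰 := ⟨⟨u₀, hu₀⟩⟩
  have hnorm1 : ∀ u : ↥𝒰, ‖lift u‖ = 1 := by
    intro u
    rw [vcoe_norm]
    refine le_antisymm ((ContinuousMap.norm_le _ zero_le_one).2 fun m => ?_) ?_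
    · have := u.2.1 m
      rw [Real.norm_eq_abs, abs_le]
      exact ⟨by linarith [this.1], this.2⟩
    · have h5 := (u.1).norm_coe_le_norm ℓ
      rw [Real.norm_eq_abs, u.2.2.1] at h5
      simpa using h5
  have hSnorm : ∀ u : ↥𝒰, ‖S (lift u)‖ = 1 := fun u => by rw [S.norm_map, hnorm1]
  haveI : Nonempty K := by
    by_contra hKe
    rw [not_nonempty_iff] at hKe
    have hz : (S (lift ⟨u₀, hu₀⟩)) = 0 := by ext y; exact hKe.elim y
    have hn := hSnorm ⟨u₀, hu₀⟩
    rw [hz, norm_zero] at hn; norm_num at hn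
  let Cs : ↥𝒰 → Set K := fun u => {y | |S (lift u) y| = 1}
  have hclosed : ∀ u, IsClosed (Cs u) :=
    fun u => IsClosed.preimage ((S (lift u)).continuous.abs) isClosed_singleton
  have hattain : ∀ u : ↥𝒰, (Cs u).Nonempty := by
    intro u
    obtain ⟨y, -, hy⟩ := isCompact_univ.exists_isMaxOn Set.univ_nonempty
      ((S (lift u)).continuous.abs).continuousOn
    refine ⟨y, le_antisymm ?_ ?_⟩
    · have := (S (lift u)).norm_coe_le_norm y
      rw [Real.norm_eq_abs] at this
      rw [hSnorm u] at this
      exact this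
    · rw [← hSnorm u]
      refine (ContinuousMap.norm_le _ (abs_nonneg _)).2 fun z => ?_
      rw [Real.norm_eq_abs]
      exact hy (Set.mem_univ z)
  have hmin : ∀ u v : ↥𝒰, ∃ w : ↥𝒰,
      (∀ m, (w.1 : C(L,ℝ)) m ≤ u.1 m ∧ (w.1 : C(L,ℝ)) m ≤ v.1 m) ∧ Cs w ⊆ Cs u ∩ Cs v := by
    intro u v
    have hw𝒰 : (u.1 ⊓ v.1 : C(L,ℝ)) ∈ 𝒰 := by
      refine ⟨fun m => ?_, ?_, fun m hm => ?_⟩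
      · have h1 := u.2.1 m; have h2 := v.2.1 m
        simp only [ContinuousMap.inf_apply]
        exact ⟨le_min h1.1 h2.1, min_le_of_left_le h1.2⟩
      · simp only [ContinuousMap.inf_apply, u.2.2.1, v.2.2.1, min_self]
      · simp only [ContinuousMap.inf_apply, u.2.2.2 m hm, v.2.2.2 m hm, min_self]
    refine ⟨⟨_, hw𝒰⟩, fun m => ⟨?_, ?_⟩, fun y hy => ⟨?_, ?_⟩⟩
    · exact min_le_left _ _
    · exact min_le_right _ _
    · have := peak_eq (u := lift ⟨_, hw𝒰⟩) (v := lift u) hF S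
        (fun m => hw𝒰.1 m) (fun m => u.2.1 m) (fun m => min_le_left _ _) hy
      show |S (lift u) y| = 1
      rw [this]; exact hy
    · have := peak_eq (u := lift ⟨_, hw𝒰⟩) (v := lift v) hF S
        (fun m => hw𝒰.1 m) (fun m => v.2.1 m) (fun m => min_le_right _ _) hy
      show |S (lift v) y| = 1
      rw [this]; exact hy
  have hdir : Directed (fun a b : Set K => a ⊇ b) Cs := by
    intro u v
    obtain ⟨w, -, hw⟩ := hmin u v
    exact ⟨w, fun y hy => (hw hy).1, fun y hy => (hw hy).2⟩
  obtain ⟨y, hy⟩ := IsCompact.nonempty_iInter_of_directed_nonempty_isCompact_isClosed Cs hdir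
    hattain (fun u => (hclosed u).isCompact) hclosed
  have hyall : ∀ u : ↥𝒰, |S (lift u) y| = 1 := fun u => Set.mem_iInter.mp hy u
  set e : ℝ := S (lift ⟨u₀, hu₀⟩) y with he
  have hye : ∀ u : ↥𝒰, S (lift u) y = e := by
    intro u
    obtain ⟨w, hw1, -⟩ := hmin u ⟨u₀, hu₀⟩
    have hyw : |S (lift w) y| = 1 := hyall w
    have h1 := peak_eq (u := lift w) (v := lift u) hF S
      (fun m => w.2.1 m) (fun m => u.2.1 m) (fun m => (hw1 m).1) hyw
    have h2 := peak_eq (u := lift w) (v := lift ⟨u₀, hu₀⟩) hF S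
      (fun m => w.2.1 m) (fun m => hu₀.1 m) (fun m => (hw1 m).2) hyw
    rw [h1, he]
    exact h2.symm
  have habs : |e| = 1 := by rw [he]; exact hyall ⟨u₀, hu₀⟩
  have hee : e * e = 1 := by
    have h7 := sq_abs e
    rw [habs] at h7
    nlinarith
  refine ⟨y, e, habs, ?_⟩
  have main : ∀ (h : ↥(vanishingSubmodule F)) (δ : ℝ), 0 < δ →
      e * S h y ≤ (h : C(L,ℝ)) ℓ + δ := by
    intro h δ hδ
    set hc : C(L, ℝ) := (h : C(L,ℝ)) with hhc
    set V := {m | hc m < hc ℓ + δ} with hVdef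
    have hV : IsOpen V := isOpen_lt hc.continuous continuous_const
    have hℓV : ℓ ∈ V := by simp only [hVdef, Set.mem_setOf_eq]; linarith
    obtain ⟨u, hu1, hu2, hu3, hu4⟩ := urysohn_vanishing hF hℓ hV hℓV
    have huU : u ∈ 𝒰 := ⟨hu1, hu2, hu3⟩
    set t : ℝ := ‖hc‖ + |hc ℓ| + δ with ht
    have htpos : (0:ℝ) ≤ t + hc ℓ + δ := by
      have := neg_abs_le (hc ℓ)
      have := norm_nonneg hc
      nlinarith
    have hb : ‖hc + t • u‖ ≤ t + hc ℓ + δ := by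
      refine (ContinuousMap.norm_le _ htpos).2 fun m => ?_
      rw [Real.norm_eq_abs, ContinuousMap.add_apply, ContinuousMap.smul_apply, smul_eq_mul,
        abs_le]
      have hm1 := hc.norm_coe_le_norm m
      rw [Real.norm_eq_abs] at hm1
      have hm1' := abs_le.mp hm1
      have habs2 := neg_abs_le (hc ℓ)
      have habs3 := le_abs_self (hc ℓ)
      rcases eq_or_lt_of_le (hu1 m).1 with h0 | hpos
      · rw [← h0, mul_zero, add_zero]
        constructor <;> nlinarith [hm1'.1, hm1'.2]
      · have hmV : m ∈ V := by
          by_contra hmV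
          rw [hu4 m hmV] at hpos
          exact lt_irrefl _ hpos
        have hmV' : hc m < hc ℓ + δ := hmV
        have hu5 := (hu1 m).2
        constructor <;> nlinarith [hm1'.1, hm1'.2, hpos.le, norm_nonneg hc]
    have heval : S (h + t • (lift ⟨u, huU⟩)) y = S h y + t * e := by
      rw [map_add, map_smul]
      simp only [ContinuousMap.add_apply, ContinuousMap.smul_apply, smul_eq_mul]
      rw [hye ⟨u, huU⟩]
    have hcoe : ((h + t • (lift ⟨u, huU⟩) : ↥(vanishingSubmodule F)) : C(L,ℝ)) = hc + t • u := by
      push_cast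
      rfl
    have hnorm : |S h y + t * e| ≤ t + hc ℓ + δ := by
      calc |S h y + t * e| = ‖S (h + t • (lift ⟨u, huU⟩)) y‖ := by
            rw [heval, Real.norm_eq_abs]
        _ ≤ ‖S (h + t • (lift ⟨u, huU⟩))‖ := (S _).norm_coe_le_norm y
        _ = ‖(h + t • (lift ⟨u, huU⟩) : ↥(vanishingSubmodule F))‖ := S.norm_map _
        _ = ‖hc + t • u‖ := by rw [vcoe_norm, hcoe]
        _ ≤ t + hc ℓ + δ := hb
    have h8 : e * (S h y + t * e) ≤ |S h y + t * e| := by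
      calc e * (S h y + t * e) ≤ |e * (S h y + t * e)| := le_abs_self _
        _ = |e| * |S h y + t * e| := abs_mul _ _
        _ = |S h y + t * e| := by rw [habs, one_mul]
    have h9 : e * (S h y + t * e) = e * S h y + t := by
      rw [mul_add, show e * (t * e) = t * (e * e) by ring, hee, mul_one]
    linarith [h8, hnorm, h9]
  intro h
  have h1 : e * S h y ≤ (h : C(L,ℝ)) ℓ := by
    refine le_of_forall_pos_le_add fun δ hδ => main h δ hδ
  have h2 : -(e * S h y) ≤ -((h : C(L,ℝ)) ℓ) := by
    refine le_of_forall_pos_le_add fun δ hδ => ?_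
    have h3 := main (-h) δ hδ
    rw [S.map_neg] at h3
    have h4 : ((-h : ↥(vanishingSubmodule F)) : C(L,ℝ)) ℓ = -((h : C(L,ℝ)) ℓ) := by
      push_cast; rfl
    rw [h4] at h3
    simp only [ContinuousMap.neg_apply] at h3
    linarith
  have h5 : e * S h y = (h : C(L,ℝ)) ℓ := le_antisymm h1 (by linarith)
  have h6 : S h y = e * (e * S h y) := by rw [← mul_assoc, hee, one_mul]
  rw [h6, h5]

end Rep


universe u v

set_option maxHeartbeats 4000000 in
theorem key (n : ℕ) : ∀ (K : Type u) (L : Type v) [TopologicalSpace K] [CompactSpace K]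
    [T2Space K] [TopologicalSpace L] [CompactSpace L] [T2Space L],
    HasExtensionProperty K → derivedSet^[n] (Set.univ : Set L) = ∅ →
    ∀ (F : Set L), IsClosed F →
    ∀ (S : ↥(vanishingSubmodule F) →ₗᵢ[ℝ] C(K, ℝ)),
    ∃ T : C(K, ℝ) →L[ℝ] ↥(vanishingSubmodule F), ∀ h, T (S h) = h := by
  induction n with
  | zero =>
    intro K L _ _ _ _ _ _ hK hL F hF S
    refine ⟨0, fun h => ?_⟩
    rw [Function.iterate_zero_apply] at hL
    haveI : IsEmpty L := Set.univ_eq_empty_iff.mp hL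
    apply Subtype.ext
    ext m
    exact (IsEmpty.false m).elim
  | succ n ih =>
    intro K L _ _ _ _ _ _ hK hL F hF S
    classical
    by_cases hFu : ∀ ℓ : L, ℓ ∈ F
    · refine ⟨0, fun h => ?_⟩
      apply Subtype.ext; ext m
      simp only [ContinuousLinearMap.zero_apply, Submodule.coe_zero, ContinuousMap.zero_apply]
      exact (h.2 m (hFu m)).symm
    push_neg at hFu
    obtain ⟨ℓ₀, hℓ₀⟩ := hFu
    haveI hKne : Nonempty K := by
      obtain ⟨y, -, -⟩ := exists_rep hF S hℓ₀; exact ⟨y⟩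
    have hrep : ∀ ℓ : L, ∃ q : K × ℝ, ℓ ∉ F → (|q.2| = 1 ∧
        ∀ h : ↥(vanishingSubmodule F), S h q.1 = q.2 * (h : C(L,ℝ)) ℓ) := by
      intro ℓ
      by_cases hℓ : ℓ ∈ F
      · exact ⟨(Classical.arbitrary K, 0), fun hc => absurd hℓ hc⟩
      · obtain ⟨y, e, he, hy⟩ := exists_rep hF S hℓ
        exact ⟨(y, e), fun _ => ⟨he, hy⟩⟩
    choose q hq using hrep
    set x : L → K := fun ℓ => (q ℓ).1 with hxdef
    set ε : L → ℝ := fun ℓ => (q ℓ).2 with hεdef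
    have hεabs : ∀ ℓ, ℓ ∉ F → |ε ℓ| = 1 := fun ℓ hℓ => (hq ℓ hℓ).1
    have hrepr : ∀ (ℓ) (_ : ℓ ∉ F) (h : ↥(vanishingSubmodule F)),
        S h (x ℓ) = ε ℓ * (h : C(L,ℝ)) ℓ := fun ℓ hℓ h => (hq ℓ hℓ).2 h
    have hee : ∀ ℓ, ℓ ∉ F → ε ℓ * ε ℓ = 1 := by
      intro ℓ hℓ
      have h7 := sq_abs (ε ℓ)
      rw [hεabs ℓ hℓ] at h7
      nlinarith
    have hinj : ∀ ℓ m, ℓ ∉ F → m ∉ F → x ℓ = x m → ℓ = m := by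
      intro ℓ m hℓ hm hxy
      by_contra hne
      obtain ⟨u, hu1, hu2, hu3, hu4⟩ := urysohn_vanishing hF hℓ
        (isOpen_compl_singleton (x := m)) (by simpa using hne)
      set hu : ↥(vanishingSubmodule F) := ⟨u, hu3⟩ with hudef
      have h1 := hrepr ℓ hℓ hu
      have h2 := hrepr m hm hu
      rw [hxy, h2] at h1
      have h3 : u m = 0 := hu4 m (by simp)
      have h4 : u ℓ = 1 := hu2
      have h5 : (hu : C(L,ℝ)) = u := rfl
      rw [h5] at h1
      rw [h3, h4, mul_zero, mul_one] at h1
      have := hεabs ℓ hℓ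
      rw [← h1] at this
      norm_num at this
    set M : Set L := derivedSet Set.univ with hMdef
    have hM : IsClosed M := isClosed_derivedSet _
    set Ω₀ : Set L := {ℓ | ℓ ∉ F ∧ ℓ ∉ M} with hΩ₀def
    set Ω₁ : Set L := {ℓ | ℓ ∉ F ∧ ℓ ∈ M} with hΩ₁def
    set B : Set K := closure (x '' Ω₁) ∪ derivedSet (x '' Ω₀) with hBdef
    have hBclosed : IsClosed B := isClosed_closure.union (isClosed_derivedSet _)
    haveI : CompactSpace ↥B := isCompact_iff_compactSpace.mp hBclosed.isCompact
    haveI : CompactSpace ↥M := isCompact_iff_compactSpace.mp hM.isCompact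
    obtain ⟨E, hE⟩ : ∃ E : C(↥B, ℝ) →L[ℝ] C(K, ℝ), IsExtensionOperator B E := by
      rcases Set.eq_empty_or_nonempty B with hBe | hBne
      · refine ⟨0, fun φ => ?_⟩
        ext z
        obtain ⟨zv, hzv⟩ := z
        rw [hBe] at hzv
        exact absurd hzv (Set.notMem_empty _)
      · exact hK B hBne hBclosed
    have hEapp : ∀ (φ : C(↥B,ℝ)) (z : ↥B), E φ z.1 = φ z := by
      intro φ z
      have h1 := ContinuousMap.congr_fun (hE φ) z
      simpa [ContinuousMap.restrict_apply] using h1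
    set F' : Set ↥M := Subtype.val ⁻¹' F with hF'def
    have hF' : IsClosed F' := hF.preimage continuous_subtype_val
    -- norm-controlled extensions from M
    have hext : ∀ g : ↥(vanishingSubmodule F'), ∃ hh : ↥(vanishingSubmodule F),
        (∀ (m : L) (hm : m ∈ M), (hh : C(L,ℝ)) m = (g : C(↥M,ℝ)) ⟨m, hm⟩) ∧
        ‖(hh : C(L,ℝ))‖ ≤ ‖(g : C(↥M,ℝ))‖ := by
      intro g
      obtain ⟨h₀, hh₀⟩ := ContinuousMap.exists_restrict_eq hM (g : C(↥M,ℝ))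
      have hh₀' : ∀ (m : L) (hm : m ∈ M), h₀ m = (g : C(↥M,ℝ)) ⟨m, hm⟩ := by
        intro m hm
        have := ContinuousMap.congr_fun hh₀ ⟨m, hm⟩
        simpa [ContinuousMap.restrict_apply] using this
      set MF : Set L := M ∪ F with hMFdef
      have hMFc : IsClosed MF := hM.union hF
      set s : Set ↥MF := Subtype.val ⁻¹' M with hsdef
      have hsc : IsClosed s := hM.preimage continuous_subtype_val
      have hscc : IsClosed sᶜ → True := fun _ => trivial
      have hfrontier : ∀ a ∈ frontier s, (fun z : ↥MF => h₀ z.1) a = (fun _ : ↥MF => (0:ℝ)) a := by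
        intro a ha
        have h1 : a ∈ s := hsc.closure_subset ha.1
        have h2 : a ∈ closure sᶜ := by
          rw [closure_compl]
          exact ha.2
        have h3 : (sᶜ : Set ↥MF) ⊆ Subtype.val ⁻¹' F := by
          intro z hz
          rcases z.2 with hzM | hzF
          · exact absurd hzM hz
          · exact hzF
        have h4 : a.1 ∈ F := (hF.preimage continuous_subtype_val).closure_subset
          ((closure_mono h3) h2)
        have h5 : h₀ a.1 = (g : C(↥M,ℝ)) ⟨a.1, h1⟩ := hh₀' a.1 h1
        have h6 : (g : C(↥M,ℝ)) ⟨a.1, h1⟩ = 0 := g.2 ⟨a.1, h1⟩ h4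
        simp [h5, h6]
      set G : C(↥MF, ℝ) := ⟨s.piecewise (fun z => h₀ z.1) (fun _ => 0),
        Continuous.piecewise hfrontier (h₀.continuous.comp continuous_subtype_val)
          continuous_const⟩ with hGdef
      obtain ⟨h₁, hh₁⟩ := ContinuousMap.exists_restrict_eq hMFc G
      have hh₁' : ∀ (m : L) (hm : m ∈ MF), h₁ m = G ⟨m, hm⟩ := by
        intro m hm
        have := ContinuousMap.congr_fun hh₁ ⟨m, hm⟩
        simpa [ContinuousMap.restrict_apply] using this
      set c : ℝ := ‖(g : C(↥M,ℝ))‖ with hcdef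
      have hc0 : 0 ≤ c := norm_nonneg _
      set hhfun : L → ℝ := fun m => max (-c) (min c (h₁ m)) with hhfundef
      have hhcont : Continuous hhfun :=
        continuous_const.max (continuous_const.min h₁.continuous)
      have hclamp : ∀ v : ℝ, |v| ≤ c → max (-c) (min c v) = v := by
        intro v hv
        rw [min_eq_right (abs_le.mp hv).2, max_eq_right (abs_le.mp hv).1]
      have hvalM : ∀ (m : L) (hm : m ∈ M), hhfun m = (g : C(↥M,ℝ)) ⟨m, hm⟩ := by
        intro m hm
        have e1 : h₁ m = (g : C(↥M,ℝ)) ⟨m, hm⟩ := by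
          rw [hh₁' m (Or.inl hm)]
          have e2 : (⟨m, Or.inl hm⟩ : ↥MF) ∈ s := hm
          rw [hGdef]
          show s.piecewise (fun z => h₀ z.1) (fun _ => 0) ⟨m, Or.inl hm⟩ = _
          rw [Set.piecewise_eq_of_mem _ _ _ e2]
          exact hh₀' m hm
        rw [hhfundef]
        show max (-c) (min c (h₁ m)) = _
        rw [e1]
        exact hclamp _ ((g : C(↥M,ℝ)).norm_coe_le_norm ⟨m, hm⟩)
      have hvalF : ∀ m ∈ F, hhfun m = 0 := by
        intro m hm
        have e1 : h₁ m = 0 := by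
          rw [hh₁' m (Or.inr hm)]
          rw [hGdef]
          show s.piecewise (fun z => h₀ z.1) (fun _ => 0) ⟨m, Or.inr hm⟩ = 0
          by_cases hmM : (⟨m, Or.inr hm⟩ : ↥MF) ∈ s
          · rw [Set.piecewise_eq_of_mem _ _ _ hmM]
            have := hh₀' m hmM
            rw [this]
            exact g.2 ⟨m, hmM⟩ hm
          · rw [Set.piecewise_eq_of_notMem _ _ _ hmM]
        rw [hhfundef]
        show max (-c) (min c (h₁ m)) = 0
        rw [e1, min_eq_right hc0, max_eq_right (neg_nonpos.mpr hc0)]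
      refine ⟨⟨⟨hhfun, hhcont⟩, fun m hm => hvalF m hm⟩, fun m hm => hvalM m hm, ?_⟩
      refine (ContinuousMap.norm_le _ hc0).2 fun m => ?_
      rw [Real.norm_eq_abs]
      show |max (-c) (min c (h₁ m))| ≤ c
      rw [abs_le]
      constructor
      · exact le_max_left _ _
      · exact max_le (neg_le_self hc0) (min_le_left _ _)
    choose extc hextc1 hextc2 using hext
    set ιB : C(↥B, K) := ⟨Subtype.val, continuous_subtype_val⟩ with hιBdef
    have hWD : ∀ hb : ↥(vanishingSubmodule F), (∀ m ∈ M, (hb : C(L,ℝ)) m = 0) →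
        ∀ z ∈ B, S hb z = 0 := by
      intro hb hbM z hz
      rcases hz with hz | hz
      · have heq : Set.EqOn (⇑(S hb)) (fun _ => (0:ℝ)) (x '' Ω₁) := by
          rintro - ⟨ℓ, hℓ, rfl⟩
          rw [hrepr ℓ hℓ.1 hb, hbM ℓ hℓ.2, mul_zero]
        exact heq.closure (S hb).continuous continuous_const hz
      · by_contra hc0
        set cc : ℝ := |S hb z| with hccdef
        have hcpos : 0 < cc := abs_pos.mpr hc0
        set A : Set L := {m | cc/2 ≤ |(hb : C(L,ℝ)) m|} with hAdef
        have hAclosed : IsClosed A :=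
          isClosed_le continuous_const ((hb : C(L,ℝ)).continuous.abs)
        have hAM : ∀ a ∈ A, a ∉ M := by
          intro a ha haM
          have h1 := hbM a haM
          have h2 : cc/2 ≤ |(hb : C(L,ℝ)) a| := ha
          rw [h1] at h2
          simp at h2
          linarith
        haveI : DiscreteTopology ↥A := by
          rw [discreteTopology_subtype_iff]
          intro a ha
          have h1 : 𝓝[≠] a = ⊥ := punctured_nhds_bot (hAM a ha)
          rw [h1, bot_inf_eq]
        have hAfin : A.Finite := hAclosed.isCompact.finite (isDiscrete_iff_discreteTopology.mpr ‹_›)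
        have hAfin' : (x '' A).Finite := hAfin.image x
        set U : Set K := {y | cc/2 < |S hb y|} with hUdef
        have hUopen : IsOpen U := isOpen_lt continuous_const ((S hb).continuous.abs)
        have hzU : z ∈ U := by
          show cc/2 < |S hb z|
          rw [← hccdef]
          linarith
        have hWmem : (U \ (x '' A \ {z})) ∈ 𝓝 z := by
          refine IsOpen.mem_nhds ?_ ⟨hzU, fun hcc2 => hcc2.2 rfl⟩
          exact hUopen.sdiff ((hAfin'.diff (t := {z})).isClosed)
        obtain ⟨yy, hyy, hyne⟩ := (accPt_iff_nhds (x := z) (C := x '' Ω₀)).mp hz _ hWmem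
        obtain ⟨ℓ, hℓΩ, rfl⟩ := hyy.2
        have hℓA : ℓ ∉ A := by
          intro hin
          exact hyy.1.2 ⟨⟨ℓ, hin, rfl⟩, hyne⟩
        have h1 : |(hb : C(L,ℝ)) ℓ| < cc/2 := not_le.mp hℓA
        have h2 : cc/2 < |S hb (x ℓ)| := hyy.1.1
        rw [hrepr ℓ hℓΩ.1 hb, abs_mul, hεabs ℓ hℓΩ.1, one_mul] at h2
        linarith
    set S₁raw : ↥(vanishingSubmodule F') → C(↥B, ℝ) :=
      fun g => (S (extc g)).comp ιB with hS₁rawdef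
    have hS₁app : ∀ (g : ↥(vanishingSubmodule F')) (z : ↥B),
        S₁raw g z = S (extc g) z.1 := fun g z => rfl
    have hS₁wd : ∀ (g : ↥(vanishingSubmodule F')) (h : ↥(vanishingSubmodule F)),
        (∀ (m : L) (hm : m ∈ M), (h : C(L,ℝ)) m = (g : C(↥M,ℝ)) ⟨m, hm⟩) →
        ∀ z : ↥B, S₁raw g z = S h z.1 := by
      intro g h hgh z
      have hdiff : ∀ m ∈ M, ((h - extc g : ↥(vanishingSubmodule F)) : C(L,ℝ)) m = 0 := by
        intro m hm
        have e1 := hgh m hm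
        have e2 := hextc1 g m hm
        show (h : C(L,ℝ)) m - (extc g : C(L,ℝ)) m = 0
        rw [e1, e2, sub_self]
      have h3 := hWD _ hdiff z.1 z.2
      rw [S.map_sub] at h3
      simp only [ContinuousMap.sub_apply] at h3
      rw [hS₁app]
      linarith
    have hS₁add : ∀ g g', S₁raw (g + g') = S₁raw g + S₁raw g' := by
      intro g g'
      ext z
      have e0 : ∀ (m : L) (hm : m ∈ M),
          ((extc g + extc g' : ↥(vanishingSubmodule F)) : C(L,ℝ)) m
            = ((g + g' : ↥(vanishingSubmodule F')) : C(↥M,ℝ)) ⟨m, hm⟩ := by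
        intro m hm
        show (extc g : C(L,ℝ)) m + (extc g' : C(L,ℝ)) m
          = (g : C(↥M,ℝ)) ⟨m, hm⟩ + (g' : C(↥M,ℝ)) ⟨m, hm⟩
        rw [hextc1 g m hm, hextc1 g' m hm]
      have e1 := hS₁wd (g + g') (extc g + extc g') e0 z
      rw [e1, map_add]
      simp only [ContinuousMap.add_apply, ContinuousMap.sub_apply]
      rw [hS₁app, hS₁app]
    have hS₁smul : ∀ (r : ℝ) (g), S₁raw (r • g) = r • S₁raw g := by
      intro r g
      ext z
      have e0 : ∀ (m : L) (hm : m ∈ M),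
          ((r • extc g : ↥(vanishingSubmodule F)) : C(L,ℝ)) m
            = ((r • g : ↥(vanishingSubmodule F')) : C(↥M,ℝ)) ⟨m, hm⟩ := by
        intro m hm
        show r * (extc g : C(L,ℝ)) m = r * (g : C(↥M,ℝ)) ⟨m, hm⟩
        rw [hextc1 g m hm]
      have e1 := hS₁wd (r • g) (r • extc g) e0 z
      rw [e1, map_smul]
      simp only [ContinuousMap.smul_apply, smul_eq_mul]
      rw [hS₁app]
    have hS₁norm : ∀ g, ‖S₁raw g‖ = ‖g‖ := by
      intro g
      refine le_antisymm ?_ ?_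
      · refine (ContinuousMap.norm_le _ (norm_nonneg _)).2 fun z => ?_
        calc ‖S₁raw g z‖ = ‖S (extc g) z.1‖ := by rw [hS₁app]
          _ ≤ ‖S (extc g)‖ := (S (extc g)).norm_coe_le_norm z.1
          _ = ‖extc g‖ := S.norm_map _
          _ ≤ ‖g‖ := hextc2 g
      · rw [show ‖g‖ = ‖(g : C(↥M,ℝ))‖ from rfl]
        refine (ContinuousMap.norm_le _ (norm_nonneg _)).2 fun p => ?_
        by_cases hpF : (p : L) ∈ F
        · rw [show (g : C(↥M,ℝ)) p = 0 from g.2 p hpF]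
          simp
        · have hq1 : (p : L) ∈ Ω₁ := ⟨hpF, p.2⟩
          have hxB : x p ∈ B := Or.inl (subset_closure ⟨p, hq1, rfl⟩)
          have e2 := hrepr p hpF (extc g)
          have e3 : (extc g : C(L,ℝ)) p = (g : C(↥M,ℝ)) p := by
            rw [hextc1 g p p.2]
          have e4 : ‖S₁raw g ⟨x p, hxB⟩‖ = ‖(g : C(↥M,ℝ)) p‖ := by
            rw [hS₁app, e2, e3, Real.norm_eq_abs, Real.norm_eq_abs, abs_mul,
              hεabs p hpF, one_mul]
          rw [← e4]
          exact (S₁raw g).norm_coe_le_norm _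
    set S₁ : ↥(vanishingSubmodule F') →ₗᵢ[ℝ] C(↥B, ℝ) :=
      { toFun := S₁raw
        map_add' := hS₁add
        map_smul' := hS₁smul
        norm_map' := hS₁norm } with hS₁def
    have hKB : HasExtensionProperty ↥B := hK.subtype hBclosed
    have hMh : derivedSet^[n] (Set.univ : Set ↥M) = ∅ := by
      rw [Set.eq_empty_iff_forall_notMem]
      intro p hp
      have h2 := iter_derivedSet_subtype M n hp
      rw [Set.mem_preimage] at h2
      have h3 : (p : L) ∈ derivedSet^[n+1] (Set.univ : Set L) := by
        rw [Function.iterate_succ_apply]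
        exact h2
      rw [hL] at h3
      exact h3
    obtain ⟨T₁, hT₁⟩ := ih ↥B ↥M hKB hMh F' hF' S₁
    set ρB : C(K, ℝ) →L[ℝ] C(↥B, ℝ) := precompCLM ιB with hρBdef
    have hfin : ∀ w : C(K,ℝ), (∀ z ∈ derivedSet (x '' Ω₀), w z = 0) → ∀ δ : ℝ, 0 < δ →
        {ℓ | ℓ ∈ Ω₀ ∧ δ ≤ |w (x ℓ)|}.Finite := by
      intro w hw δ hδ
      by_contra hinf
      have hAinf : Set.Infinite {ℓ | ℓ ∈ Ω₀ ∧ δ ≤ |w (x ℓ)|} := hinf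
      have hximg : (x '' {ℓ | ℓ ∈ Ω₀ ∧ δ ≤ |w (x ℓ)|}).Infinite := by
        refine Set.Infinite.image ?_ hAinf
        intro a ha b hb hab
        exact hinj a b ha.1.1 hb.1.1 hab
      obtain ⟨z, hz⟩ : ∃ z : K, AccPt z (𝓟 (x '' {ℓ | ℓ ∈ Ω₀ ∧ δ ≤ |w (x ℓ)|})) := by
        by_contra hno
        push_neg at hno
        exact hximg (finite_of_no_accPt hno)
      have hzD : z ∈ derivedSet (x '' Ω₀) := by
        refine AccPt.mono hz ?_
        refine principal_mono.mpr ?_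
        exact Set.image_mono (fun a ha => ha.1)
      have hz0 : w z = 0 := hw z hzD
      have hzC : z ∈ closure {y : K | δ ≤ |w y|} := by
        have h4 : z ∈ closure ((x '' {ℓ | ℓ ∈ Ω₀ ∧ δ ≤ |w (x ℓ)|}) \ {z}) := by
          rw [accPt_principal_iff_clusterPt] at hz
          exact mem_closure_iff_clusterPt.mpr hz
        refine closure_mono ?_ h4
        rintro - ⟨⟨ℓ, hℓ, rfl⟩, -⟩
        exact hℓ.2
      have h5 : δ ≤ |w z| :=
        (isClosed_le continuous_const (w.continuous.abs)).closure_subset hzC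
      rw [hz0] at h5
      simp at h5
      linarith
    have hcont : ∀ w : C(K,ℝ), (∀ z ∈ derivedSet (x '' Ω₀), w z = 0) →
        Continuous (fun ℓ : L => if ℓ ∈ Ω₀ then ε ℓ * w (x ℓ) else 0) := by
      intro w hw
      rw [continuous_iff_continuousAt]
      intro ℓs
      by_cases hm : ℓs ∈ M
      · have hval : (if ℓs ∈ Ω₀ then ε ℓs * w (x ℓs) else 0) = 0 := by
          rw [if_neg]
          intro hc
          exact hc.2 hm
        rw [ContinuousAt, hval]
        rw [Metric.tendsto_nhds]
        intro δ hδ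
        have hfin' := hfin w hw δ hδ
        have hopen : IsOpen {ℓ | ℓ ∈ Ω₀ ∧ δ ≤ |w (x ℓ)|}ᶜ := hfin'.isClosed.isOpen_compl
        have hmem : ℓs ∈ {ℓ | ℓ ∈ Ω₀ ∧ δ ≤ |w (x ℓ)|}ᶜ := fun hc => hc.1.2 hm
        filter_upwards [hopen.mem_nhds hmem] with m hm'
        rw [Real.dist_eq, sub_zero]
        by_cases hmΩ : m ∈ Ω₀
        · rw [if_pos hmΩ]
          have h6 : ¬ (δ ≤ |w (x m)|) := fun hcc => hm' ⟨hmΩ, hcc⟩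
          rw [abs_mul, hεabs m hmΩ.1, one_mul]
          linarith [not_le.mp h6]
        · rw [if_neg hmΩ]
          simpa using hδ
      · have hsing : IsOpen {ℓs} :=
          (isOpen_singleton_iff_punctured_nhds ℓs).2 (punctured_nhds_bot hm)
        have hev : ∀ᶠ m in 𝓝 ℓs,
            (fun _ : L => if ℓs ∈ Ω₀ then ε ℓs * w (x ℓs) else 0) m
              = (fun ℓ : L => if ℓ ∈ Ω₀ then ε ℓ * w (x ℓ) else 0) m := by
          filter_upwards [hsing.mem_nhds rfl] with m hm'
          rw [Set.mem_singleton_iff] at hm'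
          rw [hm']
        exact tendsto_const_nhds.congr' hev
    set Nfun : C(K, ℝ) → L → ℝ := fun f ℓ =>
      if hm : ℓ ∈ M then ((T₁ (ρB f) : C(↥M, ℝ)) ⟨ℓ, hm⟩ : ℝ)
      else if ℓ ∈ F then 0
      else ε ℓ * (E (S₁ (T₁ (ρB f))) (x ℓ) + (f - E (ρB f)) (x ℓ)) with hNfundef
    have hNcont : ∀ f, Continuous (Nfun f) := by
      intro f
      set g : ↥(vanishingSubmodule F') := T₁ (ρB f) with hgdef
      set w : C(K,ℝ) := E (S₁ g) - S (extc g) + (f - E (ρB f)) with hwdef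
      have hwvan : ∀ z ∈ derivedSet (x '' Ω₀), w z = 0 := by
        intro z hz
        have hzB : z ∈ B := Or.inr hz
        have e1 : E (S₁ g) z = S (extc g) z := by
          have := hEapp (S₁ g) ⟨z, hzB⟩
          rw [this]
          rfl
        have e2 : E (ρB f) z = f z := by
          have := hEapp (ρB f) ⟨z, hzB⟩
          rw [this]
          rfl
        rw [hwdef]
        simp only [ContinuousMap.add_apply, ContinuousMap.sub_apply]
        rw [e1, e2]
        ring
      have heqf : Nfun f
          = fun ℓ => (extc g : C(L,ℝ)) ℓ + (if ℓ ∈ Ω₀ then ε ℓ * w (x ℓ) else 0) := by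
        funext ℓ
        show (if hm : ℓ ∈ M then ((g : C(↥M, ℝ)) ⟨ℓ, hm⟩ : ℝ)
          else if ℓ ∈ F then 0
          else ε ℓ * (E (S₁ g) (x ℓ) + (f - E (ρB f)) (x ℓ))) = _
        by_cases hm : ℓ ∈ M
        · rw [dif_pos hm, if_neg (fun hc : ℓ ∈ Ω₀ => hc.2 hm), hextc1 g ℓ hm, add_zero]
        · rw [dif_neg hm]
          by_cases hf2 : ℓ ∈ F
          · rw [if_pos hf2, if_neg (fun hc : ℓ ∈ Ω₀ => hc.1 hf2),
              (extc g).2 ℓ hf2, add_zero]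
          · rw [if_neg hf2, if_pos (show ℓ ∈ Ω₀ from ⟨hf2, hm⟩)]
            have e3 := hrepr ℓ hf2 (extc g)
            have e4 := hee ℓ hf2
            rw [hwdef]
            simp only [ContinuousMap.add_apply, ContinuousMap.sub_apply]
            rw [e3]
            linear_combination ((extc g : C(L,ℝ)) ℓ) * e4
      rw [heqf]
      exact ((extc g : C(L,ℝ)).continuous).add (hcont w hwvan)
    have hNvan : ∀ f, ∀ ℓ ∈ F, Nfun f ℓ = 0 := by
      intro f ℓ hf2
      show (if hm : ℓ ∈ M then ((T₁ (ρB f) : C(↥M, ℝ)) ⟨ℓ, hm⟩ : ℝ)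
        else if ℓ ∈ F then 0
        else ε ℓ * (E (S₁ (T₁ (ρB f))) (x ℓ) + (f - E (ρB f)) (x ℓ))) = 0
      by_cases hm : ℓ ∈ M
      · rw [dif_pos hm]
        exact (T₁ (ρB f)).2 ⟨ℓ, hm⟩ hf2
      · rw [dif_neg hm, if_pos hf2]
    set Nlin : C(K, ℝ) →ₗ[ℝ] C(L, ℝ) :=
      { toFun := fun f => ⟨Nfun f, hNcont f⟩
        map_add' := by
          intro f f'
          ext ℓ
          show Nfun (f + f') ℓ = Nfun f ℓ + Nfun f' ℓ
          rw [hNfundef]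
          by_cases hm : ℓ ∈ M
          · simp only [dif_pos hm]
            simp only [map_add]
            rfl
          · simp only [dif_neg hm]
            by_cases hf2 : ℓ ∈ F
            · simp only [if_pos hf2, add_zero]
            · simp only [if_neg hf2]
              simp only [map_add, ContinuousMap.add_apply, ContinuousMap.sub_apply,
                ContinuousLinearMap.add_apply]
              ring
        map_smul' := by
          intro r f
          ext ℓ
          show Nfun (r • f) ℓ = r * Nfun f ℓ
          rw [hNfundef]
          by_cases hm : ℓ ∈ M
          · simp only [dif_pos hm]
            simp only [map_smul]
            rfl
          · simp only [dif_neg hm]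
            by_cases hf2 : ℓ ∈ F
            · simp only [if_pos hf2, mul_zero]
            · simp only [if_neg hf2]
              simp only [map_smul, ContinuousMap.smul_apply, ContinuousMap.sub_apply,
                ContinuousLinearMap.smul_apply, smul_eq_mul]
              ring } with hNlindef
    set T₁' : C(↥B, ℝ) →L[ℝ] C(↥M, ℝ) := (vanishingSubmodule F').subtypeL.comp T₁ with hT₁'def
    have hbound : ∀ f : C(K,ℝ), ‖Nlin f‖ ≤ (‖T₁'‖ + (‖E‖ * ‖T₁'‖ + (1 + ‖E‖))) * ‖f‖ := by
      intro f
      have hC0 : 0 ≤ (‖T₁'‖ + (‖E‖ * ‖T₁'‖ + (1 + ‖E‖))) * ‖f‖ := by positivity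
      refine (ContinuousMap.norm_le _ hC0).2 fun ℓ => ?_
      show ‖Nfun f ℓ‖ ≤ _
      have hg1 : ‖(T₁ (ρB f) : C(↥M,ℝ))‖ ≤ ‖T₁'‖ * ‖f‖ := by
        calc ‖(T₁ (ρB f) : C(↥M,ℝ))‖ = ‖T₁ (ρB f)‖ := rfl
          _ ≤ ‖T₁'‖ * ‖ρB f‖ := T₁'.le_opNorm _
          _ ≤ ‖T₁'‖ * ‖f‖ := by
              have := norm_precompCLM_apply_le ιB f
              exact mul_le_mul_of_nonneg_left this (norm_nonneg T₁')
      simp only [hNfundef]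
      by_cases hm : ℓ ∈ M
      · rw [dif_pos hm]
        calc ‖(T₁ (ρB f) : C(↥M,ℝ)) ⟨ℓ, hm⟩‖ ≤ ‖(T₁ (ρB f) : C(↥M,ℝ))‖ :=
              (T₁ (ρB f) : C(↥M,ℝ)).norm_coe_le_norm _
          _ ≤ ‖T₁'‖ * ‖f‖ := hg1
          _ ≤ _ := by nlinarith [norm_nonneg E, norm_nonneg f, norm_nonneg T₁']
      · rw [dif_neg hm]
        by_cases hf2 : ℓ ∈ F
        · rw [if_pos hf2]
          simpa using hC0
        · rw [if_neg hf2]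
          have e5 : ‖E (S₁ (T₁ (ρB f)))‖ ≤ ‖E‖ * (‖T₁'‖ * ‖f‖) := by
            calc ‖E (S₁ (T₁ (ρB f)))‖ ≤ ‖E‖ * ‖S₁ (T₁ (ρB f))‖ := E.le_opNorm _
              _ = ‖E‖ * ‖T₁ (ρB f)‖ := by rw [S₁.norm_map]
              _ ≤ ‖E‖ * (‖T₁'‖ * ‖f‖) := by
                  refine mul_le_mul_of_nonneg_left ?_ (norm_nonneg E)
                  exact hg1
          have e6 : ‖E (ρB f)‖ ≤ ‖E‖ * ‖f‖ := by
            calc ‖E (ρB f)‖ ≤ ‖E‖ * ‖ρB f‖ := E.le_opNorm _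
              _ ≤ ‖E‖ * ‖f‖ := mul_le_mul_of_nonneg_left
                  (norm_precompCLM_apply_le ιB f) (norm_nonneg E)
          have e7 := (E (S₁ (T₁ (ρB f)))).norm_coe_le_norm (x ℓ)
          have e8 := (E (ρB f)).norm_coe_le_norm (x ℓ)
          have e9 := f.norm_coe_le_norm (x ℓ)
          rw [Real.norm_eq_abs, abs_mul, hεabs ℓ hf2, one_mul]
          simp only [ContinuousMap.sub_apply]
          rw [Real.norm_eq_abs] at e7 e8 e9
          calc |E (S₁ (T₁ (ρB f))) (x ℓ) + (f (x ℓ) - E (ρB f) (x ℓ))|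
              ≤ |E (S₁ (T₁ (ρB f))) (x ℓ)| + |f (x ℓ)| + |E (ρB f) (x ℓ)| := by
                have t1 := abs_add_le (E (S₁ (T₁ (ρB f))) (x ℓ)) (f (x ℓ) - E (ρB f) (x ℓ))
                have t2 : |f (x ℓ) - E (ρB f) (x ℓ)| ≤ |f (x ℓ)| + |E (ρB f) (x ℓ)| := by
                  have t3 := abs_add_le (f (x ℓ)) (-(E (ρB f) (x ℓ)))
                  rwa [abs_neg, ← sub_eq_add_neg] at t3
                linarith
            _ ≤ _ := by nlinarith [norm_nonneg T₁', norm_nonneg f, norm_nonneg E]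
    set Ncl : C(K, ℝ) →L[ℝ] C(L, ℝ) := LinearMap.mkContinuous Nlin _ hbound with hNcldef
    refine ⟨Ncl.codRestrict (vanishingSubmodule F)
      (fun f => fun ℓ hf2 => hNvan f ℓ hf2), ?_⟩
    intro h
    apply Subtype.ext
    show Ncl (S h) = (h : C(L,ℝ))
    set resMh : ↥(vanishingSubmodule F') :=
      ⟨(h : C(L,ℝ)).restrict M, fun p hp => h.2 p.1 hp⟩ with hresMdef
    have hres : ρB (S h) = S₁ resMh := by
      ext z
      have e1 := hS₁wd resMh h (fun m hm => rfl) z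
      show S h z.1 = S₁raw resMh z
      rw [e1]
    have hT₁h : T₁ (ρB (S h)) = resMh := by rw [hres]; exact hT₁ resMh
    ext ℓ
    show Nfun (S h) ℓ = (h : C(L,ℝ)) ℓ
    simp only [hNfundef]
    by_cases hm : ℓ ∈ M
    · rw [dif_pos hm, hT₁h]
      rfl
    · rw [dif_neg hm]
      by_cases hf2 : ℓ ∈ F
      · rw [if_pos hf2]
        exact (h.2 ℓ hf2).symm
      · rw [if_neg hf2, hT₁h, hres]
        have e3 := hrepr ℓ hf2 h
        have e4 := hee ℓ hf2
        simp only [ContinuousMap.sub_apply]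
        rw [e3]
        linear_combination ((h : C(L,ℝ)) ℓ) * e4

theorem stmt2 {K : Type*} [TopologicalSpace K] [CompactSpace K] [T2Space K]
    {L : Type*} [TopologicalSpace L] [CompactSpace L] [T2Space L]
    (hK : HasExtensionProperty K)
    (hL : ∃ n : ℕ, derivedSet^[n] (Set.univ : Set L) = ∅)
    (F : Set L) (hF : IsClosed F)
    (S : ↥(vanishingSubmodule F) →ₗᵢ[ℝ] C(K, ℝ)) :
    (LinearMap.range S.toLinearMap).ClosedComplemented := by
  obtain ⟨n, hn⟩ := hL
  obtain ⟨T, hT⟩ := key n K L hK hn F hF S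
  refine ⟨ContinuousLinearMap.codRestrict (S.toContinuousLinearMap.comp T)
    (LinearMap.range S.toLinearMap) (fun f => ⟨T f, rfl⟩), ?_⟩
  rintro ⟨x, hx⟩
  obtain ⟨h₀, rfl⟩ := hx
  apply Subtype.ext
  have e1 : T (S.toLinearMap h₀) = h₀ := hT h₀
  show S.toContinuousLinearMap (T (S.toLinearMap h₀)) = S.toLinearMap h₀
  rw [e1]
  rfl
end
end

section
/- If K is a compact Hausdorff space having the extension property, then every isometric copy of c0(I) in C(K) is complemented; that is, for every index set I and every linear isometric embedding S : c0(I) → C(K), the range of S is complemented in C(K). -/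
open Filter Topology
open scoped ZeroAtInfty

noncomputable section

lemma c0_abs_le_norm {I : Type*} [TopologicalSpace I] (a : C₀(I, ℝ)) (i : I) : |a i| ≤ ‖a‖ := by
  rw [← ZeroAtInftyContinuousMap.norm_toBCF_eq_norm]
  simpa [Real.norm_eq_abs] using a.toBCF.norm_coe_le_norm i

lemma c0_norm_le {I : Type*} [TopologicalSpace I] (a : C₀(I, ℝ)) {M : ℝ} (hM : 0 ≤ M)
    (h : ∀ i, |a i| ≤ M) : ‖a‖ ≤ M := by
  rw [← ZeroAtInftyContinuousMap.norm_toBCF_eq_norm]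
  exact (BoundedContinuousFunction.norm_le hM).2 fun i => by simpa [Real.norm_eq_abs] using h i

lemma c0Single_apply_same {I : Type*} [TopologicalSpace I] [DiscreteTopology I] (i : I) :
    c0Single i i = (1 : ℝ) := by
  simp [c0Single]

lemma c0Single_apply_ne {I : Type*} [TopologicalSpace I] [DiscreteTopology I] {i j : I}
    (h : j ≠ i) : c0Single i j = (0 : ℝ) := by
  simp [c0Single, h]

lemma c0_sum_apply {I : Type*} [TopologicalSpace I] {J : Type*} (s : Finset J)
    (g : J → C₀(I, ℝ)) (k : I) : (∑ j ∈ s, g j) k = ∑ j ∈ s, g j k := by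
  classical
  induction s using Finset.induction_on with
  | empty => simp
  | insert _ _ h ih =>
      rw [Finset.sum_insert ‹_›, Finset.sum_insert ‹_›, ZeroAtInftyContinuousMap.coe_add,
        Pi.add_apply, ih]

lemma c0_finite_of_pos {I : Type*} [TopologicalSpace I] [DiscreteTopology I]
    (a : C₀(I, ℝ)) {ε : ℝ} (hε : 0 < ε) : {j : I | ε ≤ |a j|}.Finite := by
  have hten : Filter.Tendsto a (cocompact I) (𝓝 0) := zero_at_infty a
  have hev := Metric.tendsto_nhds.mp hten ε hε
  rw [Filter.eventually_iff, Filter.mem_cocompact] at hev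
  obtain ⟨T, hTc, hTs⟩ := hev
  refine hTc.finite_of_discrete.subset fun j hj => ?_
  by_contra hT
  have := hTs hT
  simp only [Set.mem_setOf_eq, Real.dist_eq, sub_zero] at this
  exact absurd hj (not_le.mpr this)

set_option maxHeartbeats 2000000 in
theorem stmt4 {K : Type*} [TopologicalSpace K] [CompactSpace K] [T2Space K]
    (hK : HasExtensionProperty K)
    {I : Type*} [TopologicalSpace I] [DiscreteTopology I]
    (S : C₀(I, ℝ) →ₗᵢ[ℝ] C(K, ℝ)) :
    (LinearMap.range S.toLinearMap).ClosedComplemented := by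
  classical
  obtain hI | hI := isEmpty_or_nonempty I
  · have hbot : LinearMap.range S.toLinearMap = ⊥ := by
      apply le_antisymm _ bot_le
      rintro g ⟨a, rfl⟩
      have ha : a = 0 := by ext j; exact (hI.false j).elim
      simp [ha]
    rw [hbot]
    exact Submodule.closedComplemented_bot
  set f : I → C(K, ℝ) := fun i => S (c0Single i) with hfdef
  have hnormf : ∀ i, ‖f i‖ = 1 := by
    intro i
    have h1 : ‖f i‖ = ‖c0Single (I := I) i‖ := S.norm_map _
    rw [h1]
    apply le_antisymm
    · refine c0_norm_le _ zero_le_one fun j => ?_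
      by_cases h : j = i
      · subst h; rw [c0Single_apply_same]; norm_num
      · rw [c0Single_apply_ne h]; norm_num
    · have h2 := c0_abs_le_norm (c0Single i) i
      rwa [c0Single_apply_same, abs_one] at h2
  haveI hKne : Nonempty K := by
    by_contra h
    haveI : IsEmpty K := not_nonempty_iff.mp h
    have h0 : f hI.some = 0 := by ext z; exact (IsEmpty.false z).elim
    have := hnormf hI.some
    rw [h0, norm_zero] at this
    norm_num at this
  -- pointwise ℓ¹ bound
  have hl1 : ∀ (z : K) (J : Finset I), (∑ j ∈ J, |f j z|) ≤ 1 := by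
    intro z J
    set sgn : I → ℝ := fun j => if 0 ≤ f j z then 1 else -1 with hsgn
    have hsgn1 : ∀ j, |sgn j| ≤ 1 := by
      intro j; rw [hsgn]; dsimp only; split <;> norm_num
    have hsgnmul : ∀ j, sgn j * f j z = |f j z| := by
      intro j; rw [hsgn]; dsimp only; split
      · rw [one_mul, abs_of_nonneg ‹_›]
      · rw [neg_one_mul, abs_of_neg (lt_of_not_ge ‹_›)]
    set a : C₀(I, ℝ) := ∑ j ∈ J, sgn j • c0Single j with ha
    have hanorm : ‖a‖ ≤ 1 := by
      refine c0_norm_le _ zero_le_one fun k => ?_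
      rw [ha, c0_sum_apply]
      by_cases hk : k ∈ J
      · rw [Finset.sum_eq_single k]
        · rw [ZeroAtInftyContinuousMap.coe_smul, Pi.smul_apply, c0Single_apply_same,
            smul_eq_mul, mul_one]
          exact hsgn1 k
        · intro b _ hbk
          rw [ZeroAtInftyContinuousMap.coe_smul, Pi.smul_apply,
            c0Single_apply_ne (Ne.symm hbk), smul_eq_mul, mul_zero]
        · intro hcon; exact absurd hk hcon
      · rw [Finset.sum_eq_zero]
        · norm_num
        · intro b hb
          have hkb : k ≠ b := fun e => hk (e ▸ hb)
          rw [ZeroAtInftyContinuousMap.coe_smul, Pi.smul_apply, c0Single_apply_ne hkb,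
            smul_eq_mul, mul_zero]
    have hSa : (S a) z = ∑ j ∈ J, |f j z| := by
      rw [ha, map_sum]
      have : (∑ j ∈ J, S (sgn j • c0Single j)) z
          = ∑ j ∈ J, (S (sgn j • c0Single j)) z := by
        simp [ContinuousMap.coe_sum, Finset.sum_apply]
      rw [this]
      refine Finset.sum_congr rfl fun j _ => ?_
      rw [map_smul]
      show sgn j • (f j z) = |f j z|
      rw [smul_eq_mul, hsgnmul j]
    calc (∑ j ∈ J, |f j z|) = (S a) z := hSa.symm
      _ ≤ |(S a) z| := le_abs_self _
      _ ≤ ‖S a‖ := by simpa [Real.norm_eq_abs] using (S a).norm_coe_le_norm z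
      _ = ‖a‖ := S.norm_map a
      _ ≤ 1 := hanorm
  -- points where |f i| attains 1
  have hattain : ∀ i, ∃ z : K, |f i z| = 1 := by
    intro i
    obtain ⟨z, -, hz⟩ := IsCompact.exists_isMaxOn isCompact_univ Set.univ_nonempty
      ((f i).continuous.abs.continuousOn)
    replace hz : ∀ y, |f i y| ≤ |f i z| := fun y => hz (Set.mem_univ y)
    refine ⟨z, le_antisymm ?_ ?_⟩
    · calc |f i z| ≤ ‖f i‖ := by simpa [Real.norm_eq_abs] using (f i).norm_coe_le_norm z
        _ = 1 := hnormf i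
    · rw [← hnormf i]
      exact (ContinuousMap.norm_le _ (abs_nonneg _)).2 fun y => by
        simpa [Real.norm_eq_abs] using hz y
  choose x hx using hattain
  set σ : I → ℝ := fun i => f i (x i) with hσdef
  have hσ1 : ∀ i, |σ i| = 1 := hx
  have hσsq : ∀ i, σ i * σ i = 1 := by
    intro i
    have h := abs_mul_abs_self (σ i)
    rw [hσ1 i, mul_one] at h
    exact h.symm
  -- orthogonality of coordinates
  have hzero : ∀ i j, j ≠ i → f j (x i) = 0 := by
    intro i j hji
    have h2 : |f i (x i)| + |f j (x i)| ≤ 1 := by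
      have h := hl1 (x i) {i, j}
      rwa [Finset.sum_insert (by simpa using Ne.symm hji), Finset.sum_singleton] at h
    have h3 : |f j (x i)| ≤ 0 := by
      have := hx i
      linarith
    exact abs_eq_zero.mp (le_antisymm h3 (abs_nonneg _))
  have hxinj : Function.Injective x := by
    intro i j hij
    by_contra hne
    have h0 : f i (x j) = 0 := hzero j i hne
    rw [← hij] at h0
    have h1 := hx i
    rw [hσdef] at *
    rw [h0] at h1
    norm_num at h1
  -- evaluation of S at the points x i
  have hSx : ∀ (a : C₀(I, ℝ)) (i : I), (S a) (x i) = σ i * a i := by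
    intro a i
    have key : ∀ ε : ℝ, 0 < ε → |(S a) (x i) - σ i * a i| ≤ ε := by
      intro ε hε
      have hfin := c0_finite_of_pos a hε
      set J : Finset I := insert i hfin.toFinset with hJ
      set b : C₀(I, ℝ) := ∑ j ∈ J, a j • c0Single j with hb
      have hbk : ∀ k, b k = if k ∈ J then a k else 0 := by
        intro k
        rw [hb, c0_sum_apply]
        by_cases hk : k ∈ J
        · rw [if_pos hk, Finset.sum_eq_single k]
          · rw [ZeroAtInftyContinuousMap.coe_smul, Pi.smul_apply, c0Single_apply_same,
              smul_eq_mul, mul_one]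
          · intro c _ hck
            rw [ZeroAtInftyContinuousMap.coe_smul, Pi.smul_apply,
              c0Single_apply_ne (Ne.symm hck), smul_eq_mul, mul_zero]
          · intro hcon; exact absurd hk hcon
        · rw [if_neg hk, Finset.sum_eq_zero]
          intro c hc
          have hkc : k ≠ c := fun e => hk (e ▸ hc)
          rw [ZeroAtInftyContinuousMap.coe_smul, Pi.smul_apply, c0Single_apply_ne hkc,
            smul_eq_mul, mul_zero]
      have hnr : ‖a - b‖ ≤ ε := by
        refine c0_norm_le _ hε.le fun k => ?_
        rw [ZeroAtInftyContinuousMap.coe_sub, Pi.sub_apply, hbk k]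
        by_cases hk : k ∈ J
        · rw [if_pos hk]; simpa using hε.le
        · rw [if_neg hk, sub_zero]
          have : k ∉ hfin.toFinset := fun hmem => hk (Finset.mem_insert_of_mem hmem)
          rw [Set.Finite.mem_toFinset] at this
          simp only [Set.mem_setOf_eq, not_le] at this
          exact this.le
      have hSb : (S b) (x i) = σ i * a i := by
        rw [hb, map_sum]
        have hsum : (∑ j ∈ J, S (a j • c0Single j)) (x i)
            = ∑ j ∈ J, (S (a j • c0Single j)) (x i) := by
          simp [ContinuousMap.coe_sum, Finset.sum_apply]
        rw [hsum, Finset.sum_eq_single i]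
        · rw [map_smul]
          show a i • (f i (x i)) = σ i * a i
          rw [smul_eq_mul, hσdef]
          ring
        · intro j _ hji
          rw [map_smul]
          show a j • (f j (x i)) = 0
          rw [smul_eq_mul, hzero i j hji, mul_zero]
        · intro hcon
          exact absurd (Finset.mem_insert_self i _) hcon
      have hdiff : (S a) (x i) - σ i * a i = (S (a - b)) (x i) := by
        rw [map_sub]
        show (S a) (x i) - σ i * a i = (S a) (x i) - (S b) (x i)
        rw [hSb]
      rw [hdiff]
      calc |(S (a - b)) (x i)| ≤ ‖S (a - b)‖ := by
            simpa [Real.norm_eq_abs] using (S (a - b)).norm_coe_le_norm (x i)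
        _ = ‖a - b‖ := S.norm_map _
        _ ≤ ε := hnr
    have h0 : |(S a) (x i) - σ i * a i| ≤ 0 :=
      le_of_forall_pos_le_add fun ε hε => by simpa using key ε hε
    have := abs_eq_zero.mp (le_antisymm h0 (abs_nonneg _))
    linarith [this]
  -- the separating open sets and the limit set L
  set U : I → Set K := fun i => {z | 1 / 2 < |f i z|} with hUdef
  have hUopen : ∀ i, IsOpen (U i) := fun i =>
    isOpen_lt continuous_const ((f i).continuous.abs)
  have hxU : ∀ i, x i ∈ U i := by
    intro i
    show 1 / 2 < |f i (x i)|
    rw [hx i]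
    norm_num
  set D : Set K := Set.range x with hDdef
  set L : Set K := closure D ∩ (⋃ i, U i)ᶜ with hLdef
  have hLclosed : IsClosed L := isClosed_closure.inter (isOpen_iUnion hUopen).isClosed_compl
  haveI : CompactSpace ↥L := isCompact_iff_compactSpace.mp hLclosed.isCompact
  -- every function in the range of S vanishes on L
  have hvanish : ∀ (a : C₀(I, ℝ)) (y : K), y ∈ L → (S a) y = 0 := by
    intro a y hy
    have hyD : y ∉ D := by
      intro hyd
      obtain ⟨i, rfl⟩ := hyd
      exact hy.2 (Set.mem_iUnion.mpr ⟨i, hxU i⟩)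
    have key : ∀ ε : ℝ, 0 < ε → |(S a) y| ≤ 2 * ε := by
      intro ε hε
      have hfin := c0_finite_of_pos a hε
      set Fs : Set K := x '' {j | ε ≤ |a j|} with hFs
      have hFsfin : Fs.Finite := hfin.image x
      have hW : IsOpen ({z : K | |(S a) z - (S a) y| < ε} ∩ Fsᶜ) :=
        (isOpen_lt ((S a).continuous.sub continuous_const).abs continuous_const).inter
          hFsfin.isClosed.isOpen_compl
      have hyW : y ∈ ({z : K | |(S a) z - (S a) y| < ε} ∩ Fsᶜ) := by
        constructor
        · show |(S a) y - (S a) y| < ε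
          simpa using hε
        · intro hyF
          exact hyD (by
            obtain ⟨j, -, rfl⟩ := hyF
            exact ⟨j, rfl⟩)
      obtain ⟨z, hzW, hzD⟩ := _root_.mem_closure_iff.mp hy.1 _ hW hyW
      obtain ⟨j, rfl⟩ := hzD
      have hjsmall : |a j| < ε := by
        by_contra hcon
        push_neg at hcon
        exact hzW.2 (Set.mem_image_of_mem x hcon)
      have h1 : |(S a) (x j) - (S a) y| < ε := hzW.1
      have h2 : (S a) (x j) = σ j * a j := hSx a j
      have h3 : |(S a) (x j)| < ε := by
        rw [h2, abs_mul, hσ1 j, one_mul]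
        exact hjsmall
      calc |(S a) y| = |(S a) (x j) - ((S a) (x j) - (S a) y)| := by ring_nf
        _ ≤ |(S a) (x j)| + |(S a) (x j) - (S a) y| := abs_sub _ _
        _ ≤ 2 * ε := by linarith
    have h0 : |(S a) y| ≤ 0 := by
      refine le_of_forall_pos_le_add fun ε hε => ?_
      have := key (ε / 2) (by linarith)
      linarith
    exact abs_eq_zero.mp (le_antisymm h0 (abs_nonneg _))
  -- the extension-type operator for L
  obtain ⟨E', hE'⟩ : ∃ E' : C(↥L, ℝ) →L[ℝ] C(K, ℝ),
      ∀ (h : C(↥L, ℝ)) (y : ↥L), (E' h) ↑y = h y := by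
    rcases Set.eq_empty_or_nonempty L with hLe | hLne
    · refine ⟨0, fun h y => ?_⟩
      exact (Set.eq_empty_iff_forall_notMem.mp hLe _ y.2).elim
    · obtain ⟨E, hE⟩ := hK L hLne hLclosed
      refine ⟨E, fun h y => ?_⟩
      have h1 := congrArg (fun g => g y) (hE h)
      simpa using h1
  -- finiteness of large coordinates for functions vanishing on L
  have hgfin : ∀ g : C(K, ℝ), (∀ y : ↥L, g ↑y = 0) → ∀ ε : ℝ, 0 < ε →
      {i : I | ε ≤ |g (x i)|}.Finite := by
    intro g hg ε hε
    have hCc : IsCompact (closure D ∩ {z | ε ≤ |g z|}) :=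
      (isClosed_closure.inter (isClosed_le continuous_const g.continuous.abs)).isCompact
    have hcover : (closure D ∩ {z | ε ≤ |g z|}) ⊆ ⋃ i, U i := by
      intro z hz
      by_contra hcon
      have hzL : z ∈ L := ⟨hz.1, hcon⟩
      have h1 := hg ⟨z, hzL⟩
      have h2 : ε ≤ |g z| := hz.2
      rw [show g (⟨z, hzL⟩ : ↥L) = g z from rfl] at h1
      rw [h1] at h2
      simp at h2
      linarith
    obtain ⟨J, hJ⟩ := hCc.elim_finite_subcover U hUopen hcover
    refine J.finite_toSet.subset fun i hi => ?_
    have hxi : x i ∈ closure D ∩ {z | ε ≤ |g z|} :=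
      ⟨subset_closure ⟨i, rfl⟩, hi⟩
    obtain ⟨j, hjJ, hji⟩ := Set.mem_iUnion₂.mp (hJ hxi)
    have hij : j = i := by
      by_contra hne
      have h1 : (1 : ℝ) / 2 < |f j (x i)| := hji
      rw [hzero i j hne] at h1
      norm_num at h1
    rw [← hij]
    exact hjJ
  -- tendsto property for the coordinate functions
  have hmem : ∀ g : C(K, ℝ), (∀ y : ↥L, g ↑y = 0) →
      Filter.Tendsto (fun i => σ i * g (x i)) (cocompact I) (𝓝 0) := by
    intro g hg
    rw [Metric.tendsto_nhds]
    intro ε hε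
    rw [Filter.eventually_iff, Filter.mem_cocompact]
    refine ⟨{i | ε ≤ |g (x i)|}, (hgfin g hg ε hε).isCompact, fun i hi => ?_⟩
    simp only [Set.mem_compl_iff, Set.mem_setOf_eq, not_le] at hi
    show dist (σ i * g (x i)) 0 < ε
    rw [Real.dist_eq, sub_zero, abs_mul, hσ1 i, one_mul]
    exact hi
  -- vanishing of h - E' (h.restrict L) on L
  have hvan0 : ∀ h : C(K, ℝ), ∀ y : ↥L, (h - E' (h.restrict L)) ↑y = 0 := by
    intro h y
    rw [ContinuousMap.sub_apply, hE' (h.restrict L) y, ContinuousMap.restrict_apply, sub_self]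
  -- the candidate retraction R : C(K, ℝ) → c₀(I)
  set Rraw : C(K, ℝ) → C₀(I, ℝ) := fun h =>
    { toFun := fun i => σ i * ((h - E' (h.restrict L)) (x i))
      continuous_toFun := continuous_of_discreteTopology
      zero_at_infty' := hmem _ (hvan0 h) } with hRraw
  have hRrawapp : ∀ (h : C(K, ℝ)) (i : I),
      Rraw h i = σ i * ((h - E' (h.restrict L)) (x i)) := fun h i => rfl
  have hresadd : ∀ h₁ h₂ : C(K, ℝ), (h₁ + h₂).restrict L = h₁.restrict L + h₂.restrict L := by
    intro h₁ h₂
    ext y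
    simp [ContinuousMap.restrict_apply]
  have hressmul : ∀ (c : ℝ) (h : C(K, ℝ)), (c • h).restrict L = c • h.restrict L := by
    intro c h
    ext y
    simp [ContinuousMap.restrict_apply]
  set Rlin : C(K, ℝ) →ₗ[ℝ] C₀(I, ℝ) :=
    { toFun := Rraw
      map_add' := by
        intro h₁ h₂
        ext i
        rw [ZeroAtInftyContinuousMap.coe_add, Pi.add_apply, hRrawapp, hRrawapp, hRrawapp,
          hresadd, map_add]
        simp only [ContinuousMap.sub_apply, ContinuousMap.add_apply]
        ring
      map_smul' := by
        intro c h
        ext i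
        rw [ZeroAtInftyContinuousMap.coe_smul, Pi.smul_apply, hRrawapp, hRrawapp,
          hressmul, map_smul]
        simp only [ContinuousMap.sub_apply, ContinuousMap.smul_apply, smul_eq_mul,
          RingHom.id_apply]
        ring } with hRlin
  have hrest_norm : ∀ h : C(K, ℝ), ‖h.restrict L‖ ≤ ‖h‖ := by
    intro h
    refine (ContinuousMap.norm_le _ (norm_nonneg h)).2 fun y => ?_
    rw [ContinuousMap.restrict_apply]
    exact h.norm_coe_le_norm _
  have hRbound : ∀ h : C(K, ℝ), ‖Rlin h‖ ≤ (1 + ‖E'‖) * ‖h‖ := by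
    intro h
    refine c0_norm_le _ (by positivity) fun i => ?_
    have h1 : Rlin h i = σ i * ((h - E' (h.restrict L)) (x i)) := rfl
    rw [h1, abs_mul, hσ1 i, one_mul]
    calc |(h - E' (h.restrict L)) (x i)| ≤ ‖h - E' (h.restrict L)‖ := by
          simpa [Real.norm_eq_abs] using (h - E' (h.restrict L)).norm_coe_le_norm (x i)
      _ ≤ ‖h‖ + ‖E' (h.restrict L)‖ := norm_sub_le _ _
      _ ≤ ‖h‖ + ‖E'‖ * ‖h.restrict L‖ := by linarith [E'.le_opNorm (h.restrict L)]
      _ ≤ ‖h‖ + ‖E'‖ * ‖h‖ := by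
          have := mul_le_mul_of_nonneg_left (hrest_norm h) (norm_nonneg E')
          linarith
      _ = (1 + ‖E'‖) * ‖h‖ := by ring
  set R : C(K, ℝ) →L[ℝ] C₀(I, ℝ) := Rlin.mkContinuous (1 + ‖E'‖) hRbound with hR
  -- R ∘ S = id
  have hRS : ∀ a : C₀(I, ℝ), R (S a) = a := by
    intro a
    have hres0 : (S a : C(K, ℝ)).restrict L = 0 := by
      ext y
      rw [ContinuousMap.restrict_apply]
      exact hvanish a ↑y y.2
    ext i
    have h1 : R (S a) i = σ i * (((S a : C(K, ℝ)) - E' ((S a : C(K, ℝ)).restrict L)) (x i)) := rfl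
    rw [h1, hres0, map_zero, ContinuousMap.sub_apply, ContinuousMap.zero_apply, sub_zero,
      hSx a i, ← mul_assoc, hσsq i, one_mul]
  -- construct the projection
  refine ⟨ContinuousLinearMap.codRestrict (S.toContinuousLinearMap.comp R) _
    (fun h => ⟨R h, rfl⟩), ?_⟩
  rintro ⟨g, hg⟩
  obtain ⟨a, ha⟩ := hg
  apply Subtype.ext
  show S (R g) = g
  rw [← ha]
  show S (R (S a)) = S a
  rw [hRS]
end
end

section
/- Every nonempty compact metrizable space has the regular extension property; that is, if K is a nonempty compact metrizable space and F is a nonempty closed subset of K, then there exists a bounded linear map E_F : C(F) → C(K) with ρ_F ∘ E_F = id, ‖E_F‖ ≤ 1, and E_F(1_F) = 1_K. -/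
open Filter Topology
open scoped ZeroAtInfty

noncomputable section

open Set Metric Function

lemma abs_finsum_weighted_le {ι : Type*} (w : ι → ℝ) (c : ι → ℝ) (M : ℝ)
    (hfin : (Function.support w).Finite) (hsum : ∑ᶠ i, w i = 1)
    (h0 : ∀ i, 0 ≤ w i) (hc : ∀ i, w i ≠ 0 → |c i| ≤ M) :
    |∑ᶠ i, w i * c i| ≤ M := by
  classical
  have hsubw : Function.support w ⊆ (hfin.toFinset : Set ι) := by
    intro i hi; simpa using hi
  have hsub : Function.support (fun i => w i * c i) ⊆ (hfin.toFinset : Set ι) := by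
    intro i hi
    apply hsubw
    simp only [Function.mem_support] at hi ⊢
    exact fun h => hi (by simp [h])
  have hw : ∑ i ∈ hfin.toFinset, w i = 1 := by
    rw [← finsum_eq_sum_of_support_subset w hsubw, hsum]
  rw [finsum_eq_sum_of_support_subset _ hsub]
  calc |∑ i ∈ hfin.toFinset, w i * c i| ≤ ∑ i ∈ hfin.toFinset, |w i * c i| :=
        Finset.abs_sum_le_sum_abs _ _
    _ ≤ ∑ i ∈ hfin.toFinset, w i * M := by
        apply Finset.sum_le_sum
        intro i _
        rw [abs_mul, abs_of_nonneg (h0 i)]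
        rcases eq_or_ne (w i) 0 with h | h
        · simp [h]
        · exact mul_le_mul_of_nonneg_left (hc i h) (h0 i)
    _ = M := by rw [← Finset.sum_mul, hw, one_mul]

theorem regExtAux {K : Type*} [MetricSpace K] [CompactSpace K] [Nonempty K]
    (F : Set K) [CompactSpace ↥F] (hne : F.Nonempty) (hFcl : IsClosed F) :
    ∃ E : C(↥F, ℝ) →L[ℝ] C(K, ℝ), IsExtensionOperator F E ∧ ‖E‖ ≤ 1 ∧ E 1 = 1 := by
  classical
  -- nearest points
  have hchoose : ∀ i : ↥(Fᶜ), ∃ y ∈ F, Metric.infDist (i : K) F = dist (i : K) y :=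
    fun i => hFcl.isCompact.exists_infDist_eq_dist hne (i : K)
  choose a ha hd using hchoose
  set b : ↥(Fᶜ) → ↥F := fun i => ⟨a i, ha i⟩ with hb
  set r : ↥(Fᶜ) → ℝ := fun i => Metric.infDist (i : K) F with hr
  have hrpos : ∀ i : ↥(Fᶜ), 0 < r i := fun i => (hFcl.notMem_iff_infDist_pos hne).1 i.2
  set V : ↥(Fᶜ) → Set ↥(Fᶜ) := fun i => Subtype.val ⁻¹' Metric.ball (i : K) (r i / 4) with hV
  have hVopen : ∀ i, IsOpen (V i) := fun i => Metric.isOpen_ball.preimage continuous_subtype_val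
  have hVcover : (univ : Set ↥(Fᶜ)) ⊆ ⋃ i, V i := by
    intro x _
    exact mem_iUnion.2 ⟨x, by simp only [V, mem_preimage, Metric.mem_ball, dist_self]; linarith [hrpos x]⟩
  obtain ⟨φ, hφ⟩ := PartitionOfUnity.exists_isSubordinate isClosed_univ V hVopen hVcover
  -- pointwise finite supports
  have hfin : ∀ x : ↥(Fᶜ), (Function.support fun i => φ i x).Finite := by
    intro x
    have := φ.locallyFinite.point_finite x
    exact this.subset fun i hi => hi
  have hsum1 : ∀ x : ↥(Fᶜ), ∑ᶠ i, φ i x = 1 := fun x => φ.sum_eq_one (mem_univ x)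
  -- key distance estimate
  have key : ∀ (x : ↥(Fᶜ)) (i), φ i x ≠ 0 →
      dist (a i) (x : K) ≤ 5 / 3 * Metric.infDist (x : K) F := by
    intro x i hx0
    have hx : x ∈ V i := hφ i (subset_closure hx0)
    have hball : dist (x : K) (i : K) < r i / 4 := hx
    have h1 : r i ≤ Metric.infDist (x : K) F + dist (i : K) (x : K) :=
      Metric.infDist_le_infDist_add_dist
    have h2 : dist (a i) (x : K) ≤ dist (a i) (i : K) + dist (i : K) (x : K) :=
      dist_triangle _ _ _
    have h3 : dist (a i) (i : K) = r i := by rw [dist_comm]; exact (hd i).symm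
    have h4 : dist (i : K) (x : K) = dist (x : K) (i : K) := dist_comm _ _
    nlinarith [Metric.infDist_nonneg (x := (x : K)) (s := F)]
  -- finiteness of supports of weighted families
  have hfin' : ∀ (x : ↥(Fᶜ)) (c : ↥(Fᶜ) → ℝ),
      (Function.support fun i => φ i x * c i).Finite := by
    intro x c
    refine (hfin x).subset fun i hi => ?_
    simp only [Function.mem_support] at hi ⊢
    exact fun h => hi (by simp [h])
  -- the extension of a function
  set ext : C(↥F, ℝ) → K → ℝ := fun f x =>
    if h : x ∈ F then f ⟨x, h⟩ else ∑ᶠ i, φ i ⟨x, h⟩ * f (b i) with hext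
  have hcont : ∀ f : C(↥F, ℝ), Continuous (ext f) := by
    intro f
    rw [continuous_iff_continuousAt]
    intro x
    by_cases hx : x ∈ F
    · rw [Metric.continuousAt_iff]
      intro ε hε
      obtain ⟨δ₁, hδ₁pos, hδ₁⟩ :=
        Metric.continuousAt_iff.1 (f.continuous.continuousAt (x := ⟨x, hx⟩)) (ε / 2)
          (by linarith)
      refine ⟨δ₁ / 4, by linarith, ?_⟩
      intro z hz
      have hey : ext f x = f ⟨x, hx⟩ := dif_pos hx
      by_cases hzF : z ∈ F
      · have hez : ext f z = f ⟨z, hzF⟩ := dif_pos hzF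
        rw [hez, hey]
        have hlt : dist (⟨z, hzF⟩ : ↥F) (⟨x, hx⟩ : ↥F) < δ₁ := by
          rw [Subtype.dist_eq]; simp only []; linarith
        exact lt_trans (hδ₁ hlt) (by linarith)
      · have hez : ext f z = ∑ᶠ i, φ i ⟨z, hzF⟩ * f (b i) := dif_neg hzF
        set z' : ↥(Fᶜ) := (⟨z, hzF⟩ : ↥(Fᶜ)) with hz'
        have hdz : Metric.infDist z F ≤ dist z x := Metric.infDist_le_dist_of_mem hx
        have heq : ext f z - f ⟨x, hx⟩ = ∑ᶠ i, φ i z' * (f (b i) - f ⟨x, hx⟩) := by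
          rw [finsum_congr (fun i => by ring :
            ∀ i, φ i z' * (f (b i) - f ⟨x, hx⟩)
              = φ i z' * f (b i) - φ i z' * f ⟨x, hx⟩)]
          rw [finsum_sub_distrib (hfin' z' _) (hfin' z' _), ← finsum_mul _ _,
            hsum1 z', one_mul, hez]
        have hbound : |ext f z - f ⟨x, hx⟩| ≤ ε / 2 := by
          rw [heq]
          refine abs_finsum_weighted_le _ _ _ (hfin z') (hsum1 z') (fun i => φ.nonneg i z') ?_
          intro i hi
          have hkey := key z' i hi
          have hdi : dist (a i) x ≤ dist (a i) z + dist z x := dist_triangle _ _ _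
          have hlt : dist (b i) (⟨x, hx⟩ : ↥F) < δ₁ := by
            rw [Subtype.dist_eq]
            show dist (a i) x < δ₁
            have : dist (a i) (z : K) ≤ 5 / 3 * dist z x := le_trans hkey (by linarith)
            linarith
          have := hδ₁ hlt
          rw [Real.dist_eq] at this
          exact le_of_lt this
        rw [Real.dist_eq, hey]
        exact lt_of_le_of_lt hbound (by linarith)
    · have hUo : IsOpen (Fᶜ) := hFcl.isOpen_compl
      have hco : ContinuousOn (ext f) (Fᶜ) := by
        rw [continuousOn_iff_continuous_restrict]
        have hre : (Fᶜ).restrict (ext f) = fun x' : ↥(Fᶜ) => ∑ᶠ i, φ i x' * f (b i) := by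
          funext x'
          exact dif_neg x'.2
        change Continuous ((Fᶜ).restrict (ext f)); rw [hre]
        exact continuous_finsum (fun i => ((φ i).continuous.mul continuous_const))
          (φ.locallyFinite.subset fun i => Function.support_mul_subset_left _ _)
      exact hco.continuousAt (hUo.mem_nhds hx)
  set E₀ : C(↥F, ℝ) →ₗ[ℝ] C(K, ℝ) :=
    { toFun := fun f => ⟨ext f, hcont f⟩
      map_add' := by
        intro f g
        ext x
        simp only [ContinuousMap.coe_mk, ContinuousMap.add_apply]
        by_cases hx : x ∈ F
        · rw [hext]
          simp only [dif_pos hx, ContinuousMap.add_apply]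
        · rw [hext]
          simp only [dif_neg hx]
          rw [finsum_congr (fun i => by
            simp only [ContinuousMap.add_apply]; ring :
            ∀ i, φ i ⟨x, hx⟩ * (f + g) (b i)
              = φ i ⟨x, hx⟩ * f (b i) + φ i ⟨x, hx⟩ * g (b i))]
          exact finsum_add_distrib (hfin' _ _) (hfin' _ _)
      map_smul' := by
        intro c f
        ext x
        simp only [ContinuousMap.coe_mk, ContinuousMap.smul_apply, RingHom.id_apply,
          smul_eq_mul]
        by_cases hx : x ∈ F
        · rw [hext]
          simp only [dif_pos hx, ContinuousMap.smul_apply, smul_eq_mul]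
        · rw [hext]
          simp only [dif_neg hx]
          rw [finsum_congr (fun i => by
            simp only [ContinuousMap.smul_apply, smul_eq_mul]; ring :
            ∀ i, φ i ⟨x, hx⟩ * (c • f) (b i)
              = c * (φ i ⟨x, hx⟩ * f (b i)))]
          exact (mul_finsum _ c).symm } with hE₀
  have hnorm : ∀ f, ‖E₀ f‖ ≤ 1 * ‖f‖ := by
    intro f
    rw [one_mul, ContinuousMap.norm_le _ (norm_nonneg f)]
    intro x
    show ‖ext f x‖ ≤ ‖f‖
    by_cases hx : x ∈ F
    · rw [hext]
      simp only [dif_pos hx]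
      exact f.norm_coe_le_norm ⟨x, hx⟩
    · rw [hext]
      simp only [dif_neg hx]
      rw [Real.norm_eq_abs]
      exact abs_finsum_weighted_le _ _ _ (hfin ⟨x, hx⟩) (hsum1 _) (fun i => φ.nonneg i _)
        (fun i _ => by rw [← Real.norm_eq_abs]; exact f.norm_coe_le_norm (b i))
  refine ⟨E₀.mkContinuous 1 hnorm, ?_, LinearMap.mkContinuous_norm_le E₀ zero_le_one hnorm, ?_⟩
  · intro f
    apply ContinuousMap.ext
    intro z
    show ext f z = f z
    have : ext f (z : K) = f ⟨(z : K), z.2⟩ := dif_pos z.2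
    simpa using this
  · apply ContinuousMap.ext
    intro x
    show ext 1 x = (1 : C(K, ℝ)) x
    rw [ContinuousMap.one_apply]
    by_cases hx : x ∈ F
    · rw [hext]
      simp only [dif_pos hx, ContinuousMap.one_apply]
    · rw [hext]
      simp only [dif_neg hx]
      rw [finsum_congr (fun i => by simp :
        ∀ i, φ i ⟨x, hx⟩ * (1 : C(↥F, ℝ)) (b i) = φ i ⟨x, hx⟩)]
      exact hsum1 _

theorem stmt5 {K : Type*} [TopologicalSpace K] [CompactSpace K]
    [TopologicalSpace.MetrizableSpace K] [Nonempty K] :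
    HasRegularExtensionProperty K := by
  letI : MetricSpace K := TopologicalSpace.metrizableSpaceMetric K
  intro F hFne hFcl
  haveI : CompactSpace ↥F := isCompact_iff_compactSpace.mp hFcl.isCompact
  exact regExtAux F hFne hFcl
end
end

section
/- Every compact line has the regular extension property; that is, if K is a linearly ordered set that is compact in its order topology and F is a nonempty closed subset of K, then there exists a bounded linear map E_F : C(F) → C(K) with ρ_F ∘ E_F = id, ‖E_F‖ ≤ 1, and E_F(1_F) = 1_K. -/
open Filter Topology
open scoped ZeroAtInfty

noncomputable section

attribute [local instance] Classical.propDecidable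

noncomputable section ExtAux

variable {K : Type*} [LinearOrder K] [TopologicalSpace K] [OrderTopology K] [CompactSpace K]

/-- A fixed Urysohn-type function: `ury a b a = 0`, `ury a b b = 1` when `a ≠ b`. -/
def ury (a b : K) : C(K, ℝ) :=
  if h : a ≠ b then
    (exists_continuous_zero_one_of_isClosed isClosed_singleton isClosed_singleton
      (by simpa [Set.disjoint_singleton] using h)).choose
  else 0

lemma ury_mem_Icc (a b x : K) : ury a b x ∈ Set.Icc (0:ℝ) 1 := by
  unfold ury
  split_ifs with h
  · exact (exists_continuous_zero_one_of_isClosed isClosed_singleton isClosed_singleton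
      (by simpa [Set.disjoint_singleton] using h)).choose_spec.2.2 x
  · simp

lemma ury_left {a b : K} (h : a ≠ b) : ury a b a = 0 := by
  unfold ury
  rw [dif_pos h]
  exact (exists_continuous_zero_one_of_isClosed isClosed_singleton isClosed_singleton
      (by simpa [Set.disjoint_singleton] using h)).choose_spec.1 rfl

lemma ury_right {a b : K} (h : a ≠ b) : ury a b b = 1 := by
  unfold ury
  rw [dif_pos h]
  exact (exists_continuous_zero_one_of_isClosed isClosed_singleton isClosed_singleton
      (by simpa [Set.disjoint_singleton] using h)).choose_spec.2.1 rfl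

variable {F : Set K}

/-- Greatest element of `F ∩ Iic x`. -/
def gapA (hF : IsClosed F) (x : K) (h : (F ∩ Set.Iic x).Nonempty) : K :=
  (((hF.inter isClosed_Iic).isCompact).exists_isGreatest h).choose

lemma gapA_spec (hF : IsClosed F) (x : K) (h : (F ∩ Set.Iic x).Nonempty) :
    IsGreatest (F ∩ Set.Iic x) (gapA hF x h) :=
  (((hF.inter isClosed_Iic).isCompact).exists_isGreatest h).choose_spec

/-- Least element of `F ∩ Ici x`. -/
def gapB (hF : IsClosed F) (x : K) (h : (F ∩ Set.Ici x).Nonempty) : K :=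
  (((hF.inter isClosed_Ici).isCompact).exists_isLeast h).choose

lemma gapB_spec (hF : IsClosed F) (x : K) (h : (F ∩ Set.Ici x).Nonempty) :
    IsLeast (F ∩ Set.Ici x) (gapB hF x h) :=
  (((hF.inter isClosed_Ici).isCompact).exists_isLeast h).choose_spec

/-- The extension of `f : C(F, ℝ)` as a bare function on `K`. -/
def EauxFun (hF : IsClosed F) (f : C(↥F, ℝ)) (x : K) : ℝ :=
  if hx : x ∈ F then f ⟨x, hx⟩
  else if hA : (F ∩ Set.Iic x).Nonempty then
    if hB : (F ∩ Set.Ici x).Nonempty then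
      (1 - ury (gapA hF x hA) (gapB hF x hB) x) * f ⟨gapA hF x hA, (gapA_spec hF x hA).1.1⟩
        + ury (gapA hF x hA) (gapB hF x hB) x * f ⟨gapB hF x hB, (gapB_spec hF x hB).1.1⟩
    else f ⟨gapA hF x hA, (gapA_spec hF x hA).1.1⟩
  else if hB : (F ∩ Set.Ici x).Nonempty then f ⟨gapB hF x hB, (gapB_spec hF x hB).1.1⟩
  else 0

lemma EauxFun_of_mem (hF : IsClosed F) (f : C(↥F, ℝ)) {x : K} (hx : x ∈ F) :
    EauxFun hF f x = f ⟨x, hx⟩ := by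
  simp [EauxFun, hx]

lemma EauxFun_add (hF : IsClosed F) (f g : C(↥F, ℝ)) (x : K) :
    EauxFun hF (f + g) x = EauxFun hF f x + EauxFun hF g x := by
  unfold EauxFun
  split_ifs <;> simp <;> ring

lemma EauxFun_smul (hF : IsClosed F) (c : ℝ) (f : C(↥F, ℝ)) (x : K) :
    EauxFun hF (c • f) x = c * EauxFun hF f x := by
  unfold EauxFun
  split_ifs <;> simp <;> ring

lemma EauxFun_one (hF : IsClosed F) (hne : F.Nonempty) (x : K) :
    EauxFun hF (1 : C(↥F, ℝ)) x = 1 := by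
  unfold EauxFun
  split_ifs with h1 h2 h3 h4
  · simp
  · simp
  · simp
  · simp
  · exfalso
    obtain ⟨z, hz⟩ := hne
    rcases le_total z x with h | h
    · exact h2 ⟨z, hz, h⟩
    · exact h4 ⟨z, hz, h⟩

lemma EauxFun_bound [CompactSpace ↥F] (hF : IsClosed F) (f : C(↥F, ℝ)) (x : K) :
    |EauxFun hF f x| ≤ ‖f‖ := by
  have key : ∀ z : ↥F, |f z| ≤ ‖f‖ := fun z => Real.norm_eq_abs (f z) ▸ f.norm_coe_le_norm z
  unfold EauxFun
  split_ifs with h1 h2 h3 h4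
  · exact key _
  · obtain ⟨ht0, ht1⟩ := ury_mem_Icc (gapA hF x h2) (gapB hF x h3) x
    have hA := key ⟨gapA hF x h2, (gapA_spec hF x h2).1.1⟩
    have hB := key ⟨gapB hF x h3, (gapB_spec hF x h3).1.1⟩
    rw [abs_le] at hA hB ⊢
    constructor <;> nlinarith [hA.1, hA.2, hB.1, hB.2]
  · exact key _
  · exact key _
  · simpa using norm_nonneg f



lemma convex_dist_lt {t A B C ε : ℝ} (ht0 : 0 ≤ t) (ht1 : t ≤ 1)
    (hA : dist A C < ε / 2) (hB : dist B C < ε / 2) (hε : 0 < ε) :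
    dist ((1 - t) * A + t * B) C < ε := by
  rw [Real.dist_eq] at hA hB ⊢
  rw [abs_lt] at hA hB ⊢
  constructor <;>
    nlinarith [mul_le_mul_of_nonneg_left hA.2.le (by linarith : (0:ℝ) ≤ 1 - t),
      mul_le_mul_of_nonneg_left hB.2.le ht0,
      mul_le_mul_of_nonneg_left hA.1.le (by linarith : (0:ℝ) ≤ 1 - t),
      mul_le_mul_of_nonneg_left hB.1.le ht0]

lemma EauxFun_eq_on_gap (hF : IsClosed F) (f : C(↥F, ℝ)) {a b : K} (ha : a ∈ F) (hb : b ∈ F)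
    (hgap : Set.Ioo a b ∩ F = ∅) {y : K} (hy : y ∈ Set.Ioo a b) :
    EauxFun hF f y = (1 - ury a b y) * f ⟨a, ha⟩ + ury a b y * f ⟨b, hb⟩ := by
  have hyF : y ∉ F := fun h => by
    have : y ∈ Set.Ioo a b ∩ F := ⟨hy, h⟩
    simp [hgap] at this
  have hA : (F ∩ Set.Iic y).Nonempty := ⟨a, ha, hy.1.le⟩
  have hB : (F ∩ Set.Ici y).Nonempty := ⟨b, hb, hy.2.le⟩
  have hga : gapA hF y hA = a := by
    refine (gapA_spec hF y hA).unique ⟨⟨ha, hy.1.le⟩, fun z hz => ?_⟩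
    by_contra h
    push_neg at h
    have : z ∈ Set.Ioo a b ∩ F := ⟨⟨h, lt_of_le_of_lt hz.2 hy.2⟩, hz.1⟩
    simp [hgap] at this
  have hgb : gapB hF y hB = b := by
    refine (gapB_spec hF y hB).unique ⟨⟨hb, hy.2.le⟩, fun z hz => ?_⟩
    by_contra h
    push_neg at h
    have : z ∈ Set.Ioo a b ∩ F := ⟨⟨lt_of_lt_of_le hy.1 hz.2, h⟩, hz.1⟩
    simp [hgap] at this
  have e1 : (⟨gapA hF y hA, (gapA_spec hF y hA).1.1⟩ : ↥F) = ⟨a, ha⟩ := Subtype.ext hga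
  have e2 : (⟨gapB hF y hB, (gapB_spec hF y hB).1.1⟩ : ↥F) = ⟨b, hb⟩ := Subtype.ext hgb
  rw [EauxFun, dif_neg hyF, dif_pos hA, dif_pos hB, e1, e2, hga, hgb]

lemma EauxFun_eq_of_lt_least (hF : IsClosed F) (f : C(↥F, ℝ)) {b : K} (hbl : IsLeast F b)
    {y : K} (hy : y < b) : EauxFun hF f y = f ⟨b, hbl.1⟩ := by
  have hyF : y ∉ F := fun h => absurd (hbl.2 h) (not_le.mpr hy)
  have hA : ¬(F ∩ Set.Iic y).Nonempty := by
    rintro ⟨z, hzF, hzy⟩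
    exact absurd (hbl.2 hzF) (not_le.mpr (lt_of_le_of_lt hzy hy))
  have hB : (F ∩ Set.Ici y).Nonempty := ⟨b, hbl.1, hy.le⟩
  have hgb : gapB hF y hB = b :=
    (gapB_spec hF y hB).unique ⟨⟨hbl.1, hy.le⟩, fun z hz => hbl.2 hz.1⟩
  have e : (⟨gapB hF y hB, (gapB_spec hF y hB).1.1⟩ : ↥F) = ⟨b, hbl.1⟩ := Subtype.ext hgb
  rw [EauxFun, dif_neg hyF, dif_neg hA, dif_pos hB, e]

lemma EauxFun_eq_of_greatest_lt (hF : IsClosed F) (f : C(↥F, ℝ)) {a : K} (hag : IsGreatest F a)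
    {y : K} (hy : a < y) : EauxFun hF f y = f ⟨a, hag.1⟩ := by
  have hyF : y ∉ F := fun h => absurd (hag.2 h) (not_le.mpr hy)
  have hB : ¬(F ∩ Set.Ici y).Nonempty := by
    rintro ⟨z, hzF, hzy⟩
    exact absurd (hag.2 hzF) (not_le.mpr (lt_of_lt_of_le hy hzy))
  have hA : (F ∩ Set.Iic y).Nonempty := ⟨a, hag.1, hy.le⟩
  have hga : gapA hF y hA = a :=
    (gapA_spec hF y hA).unique ⟨⟨hag.1, hy.le⟩, fun z hz => hag.2 hz.1⟩
  have e : (⟨gapA hF y hA, (gapA_spec hF y hA).1.1⟩ : ↥F) = ⟨a, hag.1⟩ := Subtype.ext hga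
  rw [EauxFun, dif_neg hyF, dif_pos hA, dif_neg hB, e]

lemma exists_between_of_no_greatest (hF : IsClosed F) {p : K}
    (hng : ¬∃ a, IsGreatest (F ∩ Set.Iio p) a) (hS : (F ∩ Set.Iio p).Nonempty)
    {q₀ : K} (hq₀ : q₀ < p) : ∃ q, q ∈ F ∧ q₀ < q ∧ q < p := by
  by_contra h
  push_neg at h
  apply hng
  have hTS : F ∩ Set.Iic q₀ = F ∩ Set.Iio p := by
    ext z
    constructor
    · rintro ⟨h1, h2⟩
      exact ⟨h1, lt_of_le_of_lt h2 hq₀⟩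
    · rintro ⟨h1, h2⟩
      simp only [Set.mem_Iio] at h2
      refine ⟨h1, ?_⟩
      simp only [Set.mem_Iic]
      by_contra h3
      push_neg at h3
      exact absurd (h z h1 h3) (not_le.mpr h2)
  obtain ⟨a, ha⟩ := ((hF.inter isClosed_Iic).isCompact).exists_isGreatest (hTS ▸ hS)
  exact ⟨a, hTS ▸ ha⟩

lemma exists_between_of_no_least (hF : IsClosed F) {p : K}
    (hng : ¬∃ a, IsLeast (F ∩ Set.Ioi p) a) (hS : (F ∩ Set.Ioi p).Nonempty)
    {q₀ : K} (hq₀ : p < q₀) : ∃ q, q ∈ F ∧ q < q₀ ∧ p < q := by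
  by_contra h
  push_neg at h
  apply hng
  have hTS : F ∩ Set.Ici q₀ = F ∩ Set.Ioi p := by
    ext z
    constructor
    · rintro ⟨h1, h2⟩
      exact ⟨h1, lt_of_lt_of_le hq₀ h2⟩
    · rintro ⟨h1, h2⟩
      simp only [Set.mem_Ioi] at h2
      refine ⟨h1, ?_⟩
      simp only [Set.mem_Ici]
      by_contra h3
      push_neg at h3
      exact absurd (h z h1 h3) (not_le.mpr h2)
  obtain ⟨a, ha⟩ := ((hF.inter isClosed_Ici).isCompact).exists_isLeast (hTS ▸ hS)
  exact ⟨a, hTS ▸ ha⟩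



lemma EauxFun_continuous (hF : IsClosed F) (hne : F.Nonempty) (f : C(↥F, ℝ)) :
    Continuous (EauxFun hF f) := by
  rw [continuous_iff_continuousAt]
  intro x
  by_cases hx : x ∈ F
  · -- point of F : check left and right continuity
    unfold ContinuousAt
    rw [EauxFun_of_mem hF f hx, ← nhdsLE_sup_nhdsGE x, Filter.tendsto_sup]
    constructor
    · -- left continuity
      by_cases hS : (F ∩ Set.Iio x).Nonempty
      · by_cases hg : ∃ a, IsGreatest (F ∩ Set.Iio x) a
        · obtain ⟨a, hag⟩ := hg
          have haF : a ∈ F := hag.1.1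
          have hap : a < x := hag.1.2
          have hgap : Set.Ioo a x ∩ F = ∅ := by
            ext z
            simp only [Set.mem_inter_iff, Set.mem_Ioo, Set.mem_empty_iff_false, iff_false]
            rintro ⟨⟨h1, h2⟩, h3⟩
            exact absurd (hag.2 ⟨h3, h2⟩) (not_le.mpr h1)
          have hgc : Continuous fun y =>
              (1 - ury a x y) * f ⟨a, haF⟩ + ury a x y * f ⟨x, hx⟩ :=
            ((continuous_const.sub (ury a x).continuous).mul continuous_const).add
              ((ury a x).continuous.mul continuous_const)
          have hgp : (1 - ury a x x) * f ⟨a, haF⟩ + ury a x x * f ⟨x, hx⟩ = f ⟨x, hx⟩ := by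
            rw [ury_right hap.ne]
            ring
          have ht : Filter.Tendsto (fun y =>
              (1 - ury a x y) * f ⟨a, haF⟩ + ury a x y * f ⟨x, hx⟩)
              (nhdsWithin x (Set.Iic x)) (nhds (f ⟨x, hx⟩)) := by
            have h := (hgc.tendsto x).mono_left (nhdsWithin_le_nhds (s := Set.Iic x))
            rwa [hgp] at h
          refine Filter.Tendsto.congr' ?_ ht
          filter_upwards [self_mem_nhdsWithin,
            mem_nhdsWithin_of_mem_nhds (isOpen_Ioi.mem_nhds hap)] with y hy1 hy2
          rcases eq_or_lt_of_le (hy1 : y ≤ x) with rfl | hlt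
          · exact hgp.trans (EauxFun_of_mem hF f hx).symm
          · exact (EauxFun_eq_on_gap hF f haF hx hgap ⟨hy2, hlt⟩).symm
        · -- no greatest element below x
          rw [Metric.tendsto_nhds]
          intro ε hε
          have hfc := Metric.tendsto_nhds.mp (f.continuous.tendsto ⟨x, hx⟩) (ε/2) (by linarith)
          rw [nhds_subtype_eq_comap] at hfc
          obtain ⟨V, hV, hVsub⟩ := Filter.mem_comap.mp hfc
          obtain ⟨s₀, hs₀F, hs₀⟩ := id hS
          obtain ⟨q₀, hq₀x, hq₀sub⟩ := exists_Ioc_subset_of_mem_nhds hV ⟨s₀, hs₀⟩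
          obtain ⟨q, hqF, hq₀q, hqx⟩ := exists_between_of_no_greatest hF hg hS hq₀x
          have hsmall : ∀ z (hz : z ∈ F), z ∈ Set.Ioc q₀ x →
              dist (f ⟨z, hz⟩) (f ⟨x, hx⟩) < ε/2 := fun z hz hzI => hVsub (hq₀sub hzI)
          filter_upwards [self_mem_nhdsWithin,
            mem_nhdsWithin_of_mem_nhds (isOpen_Ioi.mem_nhds hqx)] with y hy1 hy2
          by_cases hyF : y ∈ F
          · rw [EauxFun_of_mem hF f hyF]
            exact lt_trans (hsmall y hyF ⟨lt_trans hq₀q hy2, hy1⟩) (by linarith)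
          · have hylt : y < x := lt_of_le_of_ne hy1 (fun h => hyF (by rw [h]; exact hx))
            have hA' : (F ∩ Set.Iic y).Nonempty := ⟨q, hqF, (hy2 : q < y).le⟩
            have hB' : (F ∩ Set.Ici y).Nonempty := ⟨x, hx, hylt.le⟩
            have hda : dist (f ⟨gapA hF y hA', (gapA_spec hF y hA').1.1⟩) (f ⟨x, hx⟩) < ε/2 :=
              hsmall _ _ ⟨lt_of_lt_of_le hq₀q ((gapA_spec hF y hA').2 ⟨hqF, hy2.le⟩),
                le_trans (gapA_spec hF y hA').1.2 hy1⟩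
            have hdb : dist (f ⟨gapB hF y hB', (gapB_spec hF y hB').1.1⟩) (f ⟨x, hx⟩) < ε/2 :=
              hsmall _ _ ⟨lt_of_lt_of_le (lt_trans hq₀q hy2) (gapB_spec hF y hB').1.2,
                (gapB_spec hF y hB').2 ⟨hx, hylt.le⟩⟩
            rw [EauxFun, dif_neg hyF, dif_pos hA', dif_pos hB']
            exact convex_dist_lt (ury_mem_Icc _ _ y).1 (ury_mem_Icc _ _ y).2 hda hdb hε
      · -- nothing below x in F
        have hbl : IsLeast F x := ⟨hx, fun z hz => le_of_not_gt (fun h => hS ⟨z, hz, h⟩)⟩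
        refine Filter.Tendsto.congr' ?_ tendsto_const_nhds
        filter_upwards [self_mem_nhdsWithin] with y hy
        rcases eq_or_lt_of_le (hy : y ≤ x) with rfl | hlt
        · exact (EauxFun_of_mem hF f hx).symm
        · exact (EauxFun_eq_of_lt_least hF f hbl hlt).symm
    · -- right continuity
      by_cases hS : (F ∩ Set.Ioi x).Nonempty
      · by_cases hg : ∃ b, IsLeast (F ∩ Set.Ioi x) b
        · obtain ⟨b, hbl⟩ := hg
          have hbF : b ∈ F := hbl.1.1
          have hxb : x < b := hbl.1.2
          have hgap : Set.Ioo x b ∩ F = ∅ := by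
            ext z
            simp only [Set.mem_inter_iff, Set.mem_Ioo, Set.mem_empty_iff_false, iff_false]
            rintro ⟨⟨h1, h2⟩, h3⟩
            exact absurd (hbl.2 ⟨h3, h1⟩) (not_le.mpr h2)
          have hgc : Continuous fun y =>
              (1 - ury x b y) * f ⟨x, hx⟩ + ury x b y * f ⟨b, hbF⟩ :=
            ((continuous_const.sub (ury x b).continuous).mul continuous_const).add
              ((ury x b).continuous.mul continuous_const)
          have hgp : (1 - ury x b x) * f ⟨x, hx⟩ + ury x b x * f ⟨b, hbF⟩ = f ⟨x, hx⟩ := by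
            rw [ury_left hxb.ne]
            ring
          have ht : Filter.Tendsto (fun y =>
              (1 - ury x b y) * f ⟨x, hx⟩ + ury x b y * f ⟨b, hbF⟩)
              (nhdsWithin x (Set.Ici x)) (nhds (f ⟨x, hx⟩)) := by
            have h := (hgc.tendsto x).mono_left (nhdsWithin_le_nhds (s := Set.Ici x))
            rwa [hgp] at h
          refine Filter.Tendsto.congr' ?_ ht
          filter_upwards [self_mem_nhdsWithin,
            mem_nhdsWithin_of_mem_nhds (isOpen_Iio.mem_nhds hxb)] with y hy1 hy2
          rcases eq_or_lt_of_le (hy1 : x ≤ y) with rfl | hlt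
          · exact hgp.trans (EauxFun_of_mem hF f hx).symm
          · exact (EauxFun_eq_on_gap hF f hx hbF hgap ⟨hlt, hy2⟩).symm
        · -- no least element above x
          rw [Metric.tendsto_nhds]
          intro ε hε
          have hfc := Metric.tendsto_nhds.mp (f.continuous.tendsto ⟨x, hx⟩) (ε/2) (by linarith)
          rw [nhds_subtype_eq_comap] at hfc
          obtain ⟨V, hV, hVsub⟩ := Filter.mem_comap.mp hfc
          obtain ⟨s₀, hs₀F, hs₀⟩ := id hS
          obtain ⟨q₀, hxq₀, hq₀sub⟩ := exists_Ico_subset_of_mem_nhds hV ⟨s₀, hs₀⟩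
          obtain ⟨q, hqF, hqq₀, hxq⟩ := exists_between_of_no_least hF hg hS hxq₀
          have hsmall : ∀ z (hz : z ∈ F), z ∈ Set.Ico x q₀ →
              dist (f ⟨z, hz⟩) (f ⟨x, hx⟩) < ε/2 := fun z hz hzI => hVsub (hq₀sub hzI)
          filter_upwards [self_mem_nhdsWithin,
            mem_nhdsWithin_of_mem_nhds (isOpen_Iio.mem_nhds hxq)] with y hy1 hy2
          by_cases hyF : y ∈ F
          · rw [EauxFun_of_mem hF f hyF]
            exact lt_trans (hsmall y hyF ⟨hy1, lt_trans hy2 hqq₀⟩) (by linarith)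
          · have hylt : x < y := lt_of_le_of_ne hy1 (fun h => hyF (by rw [← h]; exact hx))
            have hA' : (F ∩ Set.Iic y).Nonempty := ⟨x, hx, hylt.le⟩
            have hB' : (F ∩ Set.Ici y).Nonempty := ⟨q, hqF, (hy2 : y < q).le⟩
            have hda : dist (f ⟨gapA hF y hA', (gapA_spec hF y hA').1.1⟩) (f ⟨x, hx⟩) < ε/2 :=
              hsmall _ _ ⟨(gapA_spec hF y hA').2 ⟨hx, hylt.le⟩,
                lt_trans (lt_of_le_of_lt (gapA_spec hF y hA').1.2 hy2) hqq₀⟩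
            have hdb : dist (f ⟨gapB hF y hB', (gapB_spec hF y hB').1.1⟩) (f ⟨x, hx⟩) < ε/2 :=
              hsmall _ _ ⟨le_trans hylt.le (gapB_spec hF y hB').1.2,
                lt_of_le_of_lt ((gapB_spec hF y hB').2 ⟨hqF, hy2.le⟩) hqq₀⟩
            rw [EauxFun, dif_neg hyF, dif_pos hA', dif_pos hB']
            exact convex_dist_lt (ury_mem_Icc _ _ y).1 (ury_mem_Icc _ _ y).2 hda hdb hε
      · -- nothing above x in F
        have hag : IsGreatest F x := ⟨hx, fun z hz => le_of_not_gt (fun h => hS ⟨z, hz, h⟩)⟩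
        refine Filter.Tendsto.congr' ?_ tendsto_const_nhds
        filter_upwards [self_mem_nhdsWithin] with y hy
        rcases eq_or_lt_of_le (hy : x ≤ y) with rfl | hlt
        · exact (EauxFun_of_mem hF f hx).symm
        · exact (EauxFun_eq_of_greatest_lt hF f hag hlt).symm
  · -- x not in F
    by_cases hA : (F ∩ Set.Iic x).Nonempty
    · by_cases hB : (F ∩ Set.Ici x).Nonempty
      · have haF : gapA hF x hA ∈ F := (gapA_spec hF x hA).1.1
        have hbF : gapB hF x hB ∈ F := (gapB_spec hF x hB).1.1
        have hax : gapA hF x hA < x :=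
          lt_of_le_of_ne (gapA_spec hF x hA).1.2 (fun h => hx (by rw [← h]; exact haF))
        have hxb : x < gapB hF x hB :=
          lt_of_le_of_ne (gapB_spec hF x hB).1.2 (fun h => hx (by rw [h]; exact hbF))
        have hgap : Set.Ioo (gapA hF x hA) (gapB hF x hB) ∩ F = ∅ := by
          ext z
          simp only [Set.mem_inter_iff, Set.mem_Ioo, Set.mem_empty_iff_false, iff_false]
          rintro ⟨⟨h1, h2⟩, h3⟩
          rcases le_total z x with h4 | h4
          · exact absurd ((gapA_spec hF x hA).2 ⟨h3, h4⟩) (not_le.mpr h1)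
          · exact absurd ((gapB_spec hF x hB).2 ⟨h3, h4⟩) (not_le.mpr h2)
        have hgc : Continuous fun y =>
            (1 - ury (gapA hF x hA) (gapB hF x hB) y) * f ⟨gapA hF x hA, haF⟩ +
              ury (gapA hF x hA) (gapB hF x hB) y * f ⟨gapB hF x hB, hbF⟩ :=
          ((continuous_const.sub (ury _ _).continuous).mul continuous_const).add
            ((ury _ _).continuous.mul continuous_const)
        refine hgc.continuousAt.congr ?_
        filter_upwards [isOpen_Ioo.mem_nhds ⟨hax, hxb⟩] with y hy
        exact (EauxFun_eq_on_gap hF f haF hbF hgap hy).symm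
      · -- x above all of F
        have hag : IsGreatest F (gapA hF x hA) := by
          refine ⟨(gapA_spec hF x hA).1.1, fun z hz => (gapA_spec hF x hA).2 ⟨hz, ?_⟩⟩
          rcases le_total z x with h | h
          · exact h
          · exact absurd ⟨z, hz, h⟩ hB
        have hax : gapA hF x hA < x :=
          lt_of_le_of_ne (gapA_spec hF x hA).1.2 (fun h => hx (by rw [← h]; exact hag.1))
        have hc : ContinuousAt (fun _ : K => f ⟨gapA hF x hA, hag.1⟩) x := continuousAt_const
        refine hc.congr ?_
        filter_upwards [isOpen_Ioi.mem_nhds hax] with y hy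
        exact (EauxFun_eq_of_greatest_lt hF f hag hy).symm
    · -- x below all of F
      have hB : (F ∩ Set.Ici x).Nonempty := by
        obtain ⟨z, hz⟩ := hne
        rcases le_total x z with h | h
        · exact ⟨z, hz, h⟩
        · exact absurd ⟨z, hz, h⟩ hA
      have hbl : IsLeast F (gapB hF x hB) := by
        refine ⟨(gapB_spec hF x hB).1.1, fun z hz => (gapB_spec hF x hB).2 ⟨hz, ?_⟩⟩
        rcases le_total x z with h | h
        · exact h
        · exact absurd ⟨z, hz, h⟩ hA
      have hxb : x < gapB hF x hB :=
        lt_of_le_of_ne (gapB_spec hF x hB).1.2 (fun h => hx (by rw [h]; exact hbl.1))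
      have hc : ContinuousAt (fun _ : K => f ⟨gapB hF x hB, hbl.1⟩) x := continuousAt_const
      refine hc.congr ?_
      filter_upwards [isOpen_Iio.mem_nhds hxb] with y hy
      exact (EauxFun_eq_of_lt_least hF f hbl hy).symm

end ExtAux

theorem stmt6 {K : Type*} [LinearOrder K] [TopologicalSpace K] [OrderTopology K]
    [CompactSpace K] :
    HasRegularExtensionProperty K := by
  intro F hne hF
  haveI : CompactSpace ↥F := isCompact_iff_compactSpace.mp hF.isCompact
  let L : C(↥F, ℝ) →ₗ[ℝ] C(K, ℝ) :=
    { toFun := fun f => ⟨EauxFun hF f, EauxFun_continuous hF hne f⟩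
      map_add' := fun f g => ContinuousMap.ext (EauxFun_add hF f g)
      map_smul' := fun c f => ContinuousMap.ext fun x => by
        simpa using EauxFun_smul hF c f x }
  have hbound : ∀ f, ‖L f‖ ≤ 1 * ‖f‖ := fun f => by
    rw [one_mul, ContinuousMap.norm_le _ (norm_nonneg f)]
    intro x
    simpa [L, Real.norm_eq_abs] using EauxFun_bound hF f x
  refine ⟨L.mkContinuous 1 hbound, fun f => ?_, L.mkContinuous_norm_le zero_le_one hbound, ?_⟩
  · ext z
    simpa [L, LinearMap.mkContinuous_apply, ContinuousMap.restrict_apply] using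
      EauxFun_of_mem hF f z.2
  · ext x
    simpa [L, LinearMap.mkContinuous_apply] using EauxFun_one hF hne x
end
end

section
/- Let K be a compact Hausdorff space and F a nonempty closed subset of K. If every point x ∈ F has a closed neighborhood V in K such that V ∩ F admits an extension operator in V, then F admits an extension operator in K. -/
open Filter Topology
open scoped ZeroAtInfty

noncomputable section

open scoped Classical

/-- Extending `φ * g` by zero outside `V`, when `tsupport φ ⊆ interior V`. -/
lemma extendByZero_continuous {K : Type*} [TopologicalSpace K] (V : Set K) (φ : C(K, ℝ))
    (hsupp : tsupport ⇑φ ⊆ interior V) (g : C(V, ℝ)) :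
    Continuous (fun x => if hx : x ∈ V then φ x * g ⟨x, hx⟩ else 0) := by
  rw [continuous_iff_continuousAt]
  intro x
  by_cases hx : x ∈ tsupport ⇑φ
  · have hxV : x ∈ interior V := hsupp hx
    have hV : V ∈ 𝓝 x :=
      mem_nhds_iff.mpr ⟨interior V, interior_subset, isOpen_interior, hxV⟩
    refine ContinuousOn.continuousAt ?_ hV
    rw [continuousOn_iff_continuous_restrict]
    have hre : (V.domRestrict fun x => if hx : x ∈ V then φ x * g ⟨x, hx⟩ else 0) =
        fun y : V => φ y * g y := by
      funext y; exact dif_pos y.2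
    rw [hre]
    exact (φ.continuous.comp continuous_subtype_val).mul g.continuous
  · have hev : (fun y => if hy : y ∈ V then φ y * g ⟨y, hy⟩ else 0) =ᶠ[𝓝 x]
        (fun _ => (0 : ℝ)) := by
      filter_upwards [(isClosed_tsupport ⇑φ).isOpen_compl.mem_nhds hx] with y hy
      have hz : φ y = 0 := image_eq_zero_of_notMem_tsupport hy
      split <;> simp [hz]
    exact (continuousAt_const (y := (0 : ℝ))).congr hev.symm

theorem stmt7 {K : Type*} [TopologicalSpace K] [CompactSpace K] [T2Space K]
    (F : Set K) (hFne : F.Nonempty) (hF : IsClosed F)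
    (h : ∀ x ∈ F, ∃ V : Set K, V ∈ nhds x ∧ IsClosed V ∧
        HasExtensionOperator ((Subtype.val : V → K) ⁻¹' F)) :
    HasExtensionOperator F := by
  haveI : CompactSpace ↥F := isCompact_iff_compactSpace.mp hF.isCompact
  choose V hVmem hVcl hVext using fun x : F => h x x.2
  have hcov : F ⊆ ⋃ x : F, interior (V x) := by
    intro y hy
    exact Set.mem_iUnion.mpr ⟨⟨y, hy⟩, mem_interior_iff_mem_nhds.mpr (hVmem ⟨y, hy⟩)⟩
  obtain ⟨t, ht⟩ := hF.isCompact.elim_finite_subcover (fun x : F => interior (V x))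
    (fun _ => isOpen_interior) hcov
  have ht' : F ⊆ ⋃ i : t, interior (V i) := by
    intro y hy
    obtain ⟨i, hit, hyi⟩ := Set.mem_iUnion₂.mp (ht hy)
    exact Set.mem_iUnion.mpr ⟨⟨i, hit⟩, hyi⟩
  obtain ⟨φ, hφ⟩ := PartitionOfUnity.exists_isSubordinate hF
    (fun i : t => interior (V i)) (fun _ => isOpen_interior) ht'
  -- For each element of the finite cover, build the local piece of the operator.
  have key : ∀ i : t, ∃ T : C(↥F, ℝ) →L[ℝ] C(K, ℝ),
      ∀ (f : C(↥F, ℝ)) (x : K) (hx : x ∈ F), (T f) x = φ i x * f ⟨x, hx⟩ := by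
    intro i
    set W : Set K := V i with hW
    have hWcl : IsClosed W := hVcl i
    haveI : CompactSpace ↥W := isCompact_iff_compactSpace.mp hWcl.isCompact
    set A : Set ↥W := (Subtype.val : ↥W → K) ⁻¹' F with hA
    have hAcl : IsClosed A := hF.preimage continuous_subtype_val
    haveI : CompactSpace ↥A := isCompact_iff_compactSpace.mp hAcl.isCompact
    obtain ⟨Ei, hEi⟩ := hVext i
    have hsupp : tsupport ⇑(φ i) ⊆ interior W := hφ i
    -- the restriction operator C(F) → C(A)
    let j : C(↥A, ↥F) := ⟨fun a => ⟨a.1.1, a.2⟩,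
      ((continuous_subtype_val.comp continuous_subtype_val).subtype_mk _)⟩
    let r : C(↥F, ℝ) →L[ℝ] C(↥A, ℝ) :=
      LinearMap.mkContinuous
        { toFun := fun f => f.comp j
          map_add' := fun f g => rfl
          map_smul' := fun c f => rfl } 1
        (by
          intro f
          rw [one_mul]
          refine (ContinuousMap.norm_le _ (norm_nonneg f)).mpr fun a => ?_
          exact f.norm_coe_le_norm (j a))
    -- the multiply-and-extend-by-zero operator C(W) → C(K)
    let z : C(↥W, ℝ) →L[ℝ] C(K, ℝ) :=
      LinearMap.mkContinuous
        { toFun := fun g => ⟨fun x => if hx : x ∈ W then φ i x * g ⟨x, hx⟩ else 0,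
            extendByZero_continuous W (φ i) hsupp g⟩
          map_add' := by
            intro g₁ g₂
            ext x
            by_cases hx : x ∈ W <;> simp [hx, mul_add]
          map_smul' := by
            intro c g
            ext x
            by_cases hx : x ∈ W <;> simp [hx] <;> ring }
        (‖φ i‖)
        (by
          intro g
          refine (ContinuousMap.norm_le _ (by positivity)).mpr fun x => ?_
          show ‖if hx : x ∈ W then φ i x * g ⟨x, hx⟩ else 0‖ ≤ ‖φ i‖ * ‖g‖
          split
          · rename_i hx
            rw [norm_mul]
            exact mul_le_mul ((φ i).norm_coe_le_norm x) (g.norm_coe_le_norm ⟨x, hx⟩)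
              (norm_nonneg _) (norm_nonneg _)
          · rw [norm_zero]; positivity)
    refine ⟨z.comp (Ei.comp r), ?_⟩
    intro f x hx
    by_cases hxW : x ∈ W
    · have hxA : (⟨x, hxW⟩ : ↥W) ∈ A := hx
      have h1 : Ei (r f) ⟨x, hxW⟩ = (r f) ⟨⟨x, hxW⟩, hxA⟩ := by
        have := congrArg (fun u : C(↥A, ℝ) => u ⟨⟨x, hxW⟩, hxA⟩) (hEi (r f))
        simpa [ContinuousMap.restrict] using this
      show (if hx' : x ∈ W then φ i x * (Ei (r f)) ⟨x, hx'⟩ else 0) = φ i x * f ⟨x, hx⟩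
      rw [dif_pos hxW, h1]
      rfl
    · have hz : φ i x = 0 := by
        refine image_eq_zero_of_notMem_tsupport fun hmem => ?_
        exact hxW (interior_subset (hsupp hmem))
      show (if hx' : x ∈ W then φ i x * (Ei (r f)) ⟨x, hx'⟩ else 0) = φ i x * f ⟨x, hx⟩
      rw [dif_neg hxW, hz, zero_mul]
  choose T hT using key
  refine ⟨∑ i : t, T i, ?_⟩
  intro f
  ext p
  have hsum : ∑ᶠ i : t, φ i (p : K) = 1 := φ.sum_eq_one p.2
  rw [finsum_eq_sum_of_fintype] at hsum
  calc ((∑ i : t, T i) f).restrict F p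
      = ∑ i : t, (T i f) (p : K) := by
        simp [ContinuousLinearMap.sum_apply, ContinuousMap.restrict]
    _ = ∑ i : t, φ i (p : K) * f p := by
        refine Finset.sum_congr rfl fun i _ => ?_
        exact hT i f (p : K) p.2
    _ = f p := by rw [← Finset.sum_mul, hsum, one_mul]
end
end

section
/- Let K be a compact Hausdorff space and F a nonempty closed subset of K. If every point x ∈ F has a closed neighborhood V in K such that V ∩ F admits a regular extension operator in V, then F admits a regular extension operator in K. -/
open Filter Topology
open scoped ZeroAtInfty

noncomputable section

open Classical in
lemma glue_cont {K : Type*} [TopologicalSpace K] (V : Set K) (φ : C(K, ℝ))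
    (hφ : tsupport φ ⊆ interior V) (g : C(↥V, ℝ)) :
    Continuous (fun x => if h : x ∈ V then φ x * g ⟨x, h⟩ else 0) := by
  set f : K → ℝ := fun x => if h : x ∈ V then φ x * g ⟨x, h⟩ else 0 with hf
  rw [continuous_iff_continuousAt]
  intro x
  by_cases hx : x ∈ tsupport φ
  · have hxV : x ∈ interior V := hφ hx
    have hcont : ContinuousOn f V := by
      rw [continuousOn_iff_continuous_restrict]
      have hr : V.domRestrict f = fun v => φ v.1 * g v := by
        funext v
        simp only [Set.domRestrict, hf, dif_pos v.2]
      rw [hr]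
      exact ((φ.continuous.comp continuous_subtype_val).mul g.continuous)
    exact hcont.continuousAt (mem_interior_iff_mem_nhds.mp hxV)
  · have hev : f =ᶠ[𝓝 x] fun _ => 0 := by
      filter_upwards [(isClosed_tsupport φ).isOpen_compl.mem_nhds hx] with y hy
      have hφy : φ y = 0 := image_eq_zero_of_notMem_tsupport hy
      by_cases hyV : y ∈ V <;> simp [hf, hyV, hφy]
    exact ContinuousAt.congr continuousAt_const hev.symm

theorem stmt8 {K : Type*} [TopologicalSpace K] [CompactSpace K] [T2Space K]
    (F : Set K) (hFne : F.Nonempty) (hF : IsClosed F)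
    (h : ∀ x ∈ F, ∃ V : Set K, V ∈ nhds x ∧ ∃ hV : IsClosed V,
        haveI : CompactSpace ↥V := isCompact_iff_compactSpace.mp hV.isCompact
        HasRegularExtensionOperator ((Subtype.val : V → K) ⁻¹' F)
          (hF.preimage continuous_subtype_val)) :
    HasRegularExtensionOperator F hF := by
  classical
  haveI : CompactSpace ↥F := isCompact_iff_compactSpace.mp hF.isCompact
  obtain ⟨x₀, hx₀⟩ := hFne
  choose V hVn hVc hE using h
  obtain ⟨t, ht⟩ := hF.isCompact.elim_nhds_subcover' (fun x hx => interior (V x hx))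
    (fun x hx => interior_mem_nhds.mpr (hVn x hx))
  set ι := {x : ↥F // x ∈ t} with hι
  set W : ι → Set K := fun i => V i.1.1 i.1.2 with hW
  have hWc : ∀ i, IsClosed (W i) := fun i => hVc i.1.1 i.1.2
  have hcsW : ∀ i, CompactSpace ↥(W i) := fun i =>
    isCompact_iff_compactSpace.mp (hWc i).isCompact
  have hcsP : ∀ i, CompactSpace ↥((Subtype.val : ↥(W i) → K) ⁻¹' F) := fun i =>
    haveI := hcsW i
    isCompact_iff_compactSpace.mp (hF.preimage continuous_subtype_val).isCompact
  choose E hEr hEn hE1 using fun i : ι => hE i.1.1 i.1.2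
  set U : ι → Set K := fun i => interior (W i) with hU
  have hcover : F ⊆ ⋃ i, U i := by
    intro y hy
    obtain ⟨x, hxt, hyx⟩ := Set.mem_iUnion₂.mp (ht hy)
    exact Set.mem_iUnion.mpr ⟨⟨x, hxt⟩, hyx⟩
  obtain ⟨ρ, hρ⟩ := PartitionOfUnity.exists_isSubordinate_of_locallyFinite hF U
    (fun i => isOpen_interior) (locallyFinite_of_finite _) hcover
  have hρW : ∀ i, tsupport (ρ i) ⊆ W i := fun i => (hρ i).trans interior_subset
  have hρ0 : ∀ i x, x ∉ W i → ρ i x = 0 := fun i x hx =>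
    image_eq_zero_of_notMem_tsupport (fun hmem => hx (hρW i hmem))
  have hsum_le : ∀ x, ∑ i, ρ i x ≤ 1 := by
    intro x
    have := ρ.sum_le_one x
    rwa [finsum_eq_sum_of_fintype] at this
  have hsum_eq : ∀ x ∈ F, ∑ i, ρ i x = 1 := by
    intro x hx
    have := ρ.sum_eq_one hx
    rwa [finsum_eq_sum_of_fintype] at this
  -- the gluing maps
  set glue : ∀ i : ι, C(↥(W i), ℝ) → C(K, ℝ) := fun i g =>
    ⟨fun x => if h : x ∈ W i then ρ i x * g ⟨x, h⟩ else 0, glue_cont _ _ (hρ i) g⟩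
    with hglue
  have glue_apply : ∀ i g x, glue i g x = if h : x ∈ W i then ρ i x * g ⟨x, h⟩ else 0 :=
    fun i g x => rfl
  -- restriction maps
  set e : ∀ i : ι, C(↥((Subtype.val : ↥(W i) → K) ⁻¹' F), ↥F) := fun i =>
    ⟨fun z => ⟨z.1.1, z.2⟩,
      (continuous_subtype_val.comp continuous_subtype_val).subtype_mk _⟩ with he
  set ψ : C(K, ℝ) := 1 - ∑ i, (ρ i : C(K, ℝ)) with hψ
  have ψ_apply : ∀ x, ψ x = 1 - ∑ i, ρ i x := by
    intro x
    simp [hψ]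
  have ψ_nonneg : ∀ x, 0 ≤ ψ x := by
    intro x; rw [ψ_apply]; linarith [hsum_le x]
  -- the candidate map
  set Tfun : C(↥F, ℝ) → C(K, ℝ) := fun f =>
    (∑ i, glue i (E i (f.comp (e i)))) + f ⟨x₀, hx₀⟩ • ψ with hT
  have T_apply : ∀ f x, Tfun f x =
      (∑ i, glue i (E i (f.comp (e i))) x) + f ⟨x₀, hx₀⟩ * ψ x := by
    intro f x
    simp [hT]
  have comp_norm : ∀ (i : ι) (f : C(↥F, ℝ)),
      haveI := hcsP i
      ‖f.comp (e i)‖ ≤ ‖f‖ := by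
    intro i f
    haveI := hcsW i; haveI := hcsP i
    refine (ContinuousMap.norm_le _ (norm_nonneg f)).mpr fun z => ?_
    exact f.norm_coe_le_norm _
  have E_pt_bound : ∀ (i : ι) (f : C(↥F, ℝ)) (y : ↥(W i)),
      |E i (f.comp (e i)) y| ≤ ‖f‖ := by
    intro i f y
    haveI := hcsW i; haveI := hcsP i
    calc |E i (f.comp (e i)) y| ≤ ‖E i (f.comp (e i))‖ :=
          (E i (f.comp (e i))).norm_coe_le_norm y
      _ ≤ ‖E i‖ * ‖f.comp (e i)‖ := (E i).le_opNorm _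
      _ ≤ 1 * ‖f‖ := by
          have h1 := hEn i
          have h2 := comp_norm i f
          have h3 : (0:ℝ) ≤ ‖f.comp (e i)‖ := norm_nonneg _
          nlinarith [norm_nonneg (E i)]
      _ = ‖f‖ := one_mul _
  have glue_bound : ∀ (i : ι) (f : C(↥F, ℝ)) (x : K),
      |glue i (E i (f.comp (e i))) x| ≤ ρ i x * ‖f‖ := by
    intro i f x
    rw [glue_apply]
    by_cases hx : x ∈ W i
    · rw [dif_pos hx, abs_mul, abs_of_nonneg (ρ.nonneg i x)]
      exact mul_le_mul_of_nonneg_left (E_pt_bound i f ⟨x, hx⟩) (ρ.nonneg i x)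
    · rw [dif_neg hx, abs_zero]
      exact mul_nonneg (ρ.nonneg i x) (norm_nonneg f)
  -- the linear map
  set T : C(↥F, ℝ) →ₗ[ℝ] C(K, ℝ) :=
    { toFun := Tfun
      map_add' := by
        intro f g
        ext x
        simp only [T_apply, ContinuousMap.add_apply]
        have : ∀ i : ι, glue i (E i ((f + g).comp (e i))) x
            = glue i (E i (f.comp (e i))) x + glue i (E i (g.comp (e i))) x := by
          intro i
          have hc : (f + g).comp (e i) = f.comp (e i) + g.comp (e i) :=
            ContinuousMap.add_comp _ _ _
          rw [hc, map_add]
          simp only [glue_apply]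
          by_cases hx : x ∈ W i
          · simp only [dif_pos hx, ContinuousMap.add_apply]; ring
          · simp only [dif_neg hx]; ring
        rw [Finset.sum_congr rfl fun i _ => this i, Finset.sum_add_distrib]
        ring
      map_smul' := by
        intro c f
        ext x
        simp only [T_apply, ContinuousMap.smul_apply, RingHom.id_apply, smul_eq_mul]
        have : ∀ i : ι, glue i (E i ((c • f).comp (e i))) x
            = c * glue i (E i (f.comp (e i))) x := by
          intro i
          have hc : (c • f).comp (e i) = c • (f.comp (e i)) :=
            ContinuousMap.smul_comp _ _ _
          rw [hc, map_smul]
          simp only [glue_apply]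
          by_cases hx : x ∈ W i
          · simp only [dif_pos hx, ContinuousMap.smul_apply, smul_eq_mul]; ring
          · simp only [dif_neg hx]; ring
        rw [Finset.sum_congr rfl fun i _ => this i, ← Finset.mul_sum]
        ring } with hTlin
  have Tbound : ∀ f : C(↥F, ℝ), ‖T f‖ ≤ 1 * ‖f‖ := by
    intro f
    rw [one_mul]
    refine (ContinuousMap.norm_le _ (norm_nonneg f)).mpr fun x => ?_
    have h1 : |Tfun f x| ≤ (∑ i, |glue i (E i (f.comp (e i))) x|)
        + |f ⟨x₀, hx₀⟩ * ψ x| := by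
      rw [T_apply]
      exact (abs_add_le _ _).trans (by
        gcongr
        exact Finset.abs_sum_le_sum_abs _ _)
    have h2 : ∑ i, |glue i (E i (f.comp (e i))) x| ≤ (∑ i, ρ i x) * ‖f‖ := by
      rw [Finset.sum_mul]
      exact Finset.sum_le_sum fun i _ => glue_bound i f x
    have h3 : |f ⟨x₀, hx₀⟩ * ψ x| ≤ ψ x * ‖f‖ := by
      rw [abs_mul, abs_of_nonneg (ψ_nonneg x), mul_comm]
      exact mul_le_mul_of_nonneg_left (f.norm_coe_le_norm _) (ψ_nonneg x)
    have h4 : (∑ i, ρ i x) * ‖f‖ + ψ x * ‖f‖ ≤ ‖f‖ := by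
      rw [ψ_apply]
      nlinarith [norm_nonneg f, hsum_le x]
    calc |Tfun f x| ≤ _ := h1
      _ ≤ (∑ i, ρ i x) * ‖f‖ + ψ x * ‖f‖ := by linarith
      _ ≤ ‖f‖ := h4
  refine ⟨LinearMap.mkContinuous T 1 Tbound, ?_, ?_, ?_⟩
  · -- extension operator
    intro f
    ext z
    have hz : (z : K) ∈ F := z.2
    have hglueF : ∀ i : ι, glue i (E i (f.comp (e i))) (z : K) = ρ i (z : K) * f z := by
      intro i
      rw [glue_apply]
      by_cases hx : (z : K) ∈ W i
      · rw [dif_pos hx]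
        have hmem : (⟨(z : K), hx⟩ : ↥(W i)) ∈ (Subtype.val : ↥(W i) → K) ⁻¹' F := hz
        have := congrArg (fun g => g (⟨⟨(z : K), hx⟩, hmem⟩ :
            ↥((Subtype.val : ↥(W i) → K) ⁻¹' F))) (hEr i (f.comp (e i)))
        simp only [ContinuousMap.restrict_apply] at this
        rw [this]
        congr 1
      · rw [dif_neg hx, hρ0 i _ hx, zero_mul]
    simp only [ContinuousMap.restrict_apply, LinearMap.mkContinuous_apply]
    show Tfun f (z : K) = f z
    rw [T_apply, Finset.sum_congr rfl fun i _ => hglueF i, ← Finset.sum_mul,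
      hsum_eq _ hz, one_mul]
    have : ψ (z : K) = 0 := by rw [ψ_apply, hsum_eq _ hz]; ring
    rw [this, mul_zero, add_zero]
  · exact LinearMap.mkContinuous_norm_le _ zero_le_one _
  · -- maps 1 to 1
    ext x
    simp only [LinearMap.mkContinuous_apply]
    show Tfun 1 x = (1 : C(K, ℝ)) x
    have hone : ∀ i : ι, (1 : C(↥F, ℝ)).comp (e i) = 1 := fun i => rfl
    have hgl1 : ∀ i : ι, glue i (E i ((1 : C(↥F, ℝ)).comp (e i))) x = ρ i x := by
      intro i
      rw [hone i, hE1 i, glue_apply]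
      by_cases hx : x ∈ W i
      · rw [dif_pos hx]; simp
      · rw [dif_neg hx, hρ0 i _ hx]
    rw [T_apply, Finset.sum_congr rfl fun i _ => hgl1 i, ψ_apply]
    simp
end
end

section
/- Let K be a compact Hausdorff space. If every point of K has a closed neighborhood having the extension property, then K has the extension property. -/
open Filter Topology
open scoped ZeroAtInfty

noncomputable section

section
attribute [local instance] Classical.propDecidable

/-- Precomposition with a continuous map, as a continuous linear map. -/
def compRightCLM {X Y : Type*} [TopologicalSpace X] [TopologicalSpace Y]
    [CompactSpace X] [CompactSpace Y] (g : C(X, Y)) : C(Y, ℝ) →L[ℝ] C(X, ℝ) :=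
  LinearMap.mkContinuous
    { toFun := fun f => f.comp g
      map_add' := fun f₁ f₂ => rfl
      map_smul' := fun c f => rfl }
    1 (fun f => by
      rw [one_mul]
      exact (ContinuousMap.norm_le _ (norm_nonneg f)).mpr fun x =>
        ContinuousMap.norm_coe_le_norm f (g x))

lemma glue_continuous {K : Type*} [TopologicalSpace K] {V : Set K} (φ : C(K, ℝ))
    (hφ : tsupport ⇑φ ⊆ interior V) (g : C(↥V, ℝ)) :
    Continuous fun x : K => if h : x ∈ V then φ x * g ⟨x, h⟩ else 0 := by
  set g' : K → ℝ := fun x => if h : x ∈ V then g ⟨x, h⟩ else 0 with hg'def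
  have hφ0 : ∀ x ∉ V, φ x = 0 := fun x hx =>
    image_eq_zero_of_notMem_tsupport (fun hxs => hx (interior_subset (hφ hxs)))
  have hfg : (fun x : K => if h : x ∈ V then φ x * g ⟨x, h⟩ else 0)
      = fun x => φ x * g' x := by
    funext x
    by_cases h : x ∈ V
    · simp [g', h]
    · simp [g', h, hφ0 x h]
  rw [hfg]
  have hg'cont : ContinuousOn g' V := by
    rw [continuousOn_iff_continuous_restrict]
    have : V.domRestrict g' = ⇑g := by
      funext x
      simp [g', x.2, Set.domRestrict_apply]
    rw [this]; exact g.continuous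
  rw [continuous_iff_continuousAt]
  intro x
  by_cases hx : x ∈ tsupport ⇑φ
  · have hxV : x ∈ interior V := hφ hx
    exact φ.continuous.continuousAt.mul
      (hg'cont.continuousAt (Filter.mem_of_superset (isOpen_interior.mem_nhds hxV)
        interior_subset))
  · have hev : (fun x => φ x * g' x) =ᶠ[nhds x] fun _ => 0 := by
      filter_upwards [(isClosed_tsupport ⇑φ).isOpen_compl.mem_nhds hx] with y hy
      simp [image_eq_zero_of_notMem_tsupport hy]
    exact (continuousAt_const (y := (0:ℝ))).congr hev.symm

/-- Multiply by `φ` (supported in the interior of the closed set `V`) and extend by zero. -/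
def mulExtendCLM {K : Type*} [TopologicalSpace K] [CompactSpace K] {V : Set K}
    (hV : IsClosed V) (φ : C(K, ℝ)) (hφ : tsupport ⇑φ ⊆ interior V) :
    C(↥V, ℝ) →L[ℝ] C(K, ℝ) :=
  haveI : CompactSpace ↥V := isCompact_iff_compactSpace.mp hV.isCompact
  LinearMap.mkContinuous
    { toFun := fun g => ⟨fun x => if h : x ∈ V then φ x * g ⟨x, h⟩ else 0,
        glue_continuous φ hφ g⟩
      map_add' := by
        intro g₁ g₂; ext x; by_cases h : x ∈ V <;> simp [h] <;> ring
      map_smul' := by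
        intro c g; ext x; by_cases h : x ∈ V <;> simp [h] <;> ring }
    ‖φ‖ (fun g => by
      haveI : CompactSpace ↥V := isCompact_iff_compactSpace.mp hV.isCompact
      refine (ContinuousMap.norm_le _ (by positivity)).mpr fun x => ?_
      show ‖(if h : x ∈ V then φ x * g ⟨x, h⟩ else 0 : ℝ)‖ ≤ ‖φ‖ * ‖g‖
      by_cases h : x ∈ V
      · simp only [h, dif_pos]
        calc ‖φ x * g ⟨x, h⟩‖ = ‖φ x‖ * ‖g ⟨x, h⟩‖ := norm_mul _ _
          _ ≤ ‖φ‖ * ‖g‖ := mul_le_mul (φ.norm_coe_le_norm x)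
              (g.norm_coe_le_norm _) (norm_nonneg _) (norm_nonneg _)
      · rw [dif_neg h, norm_zero]; positivity)

example : True := trivial

end


section
attribute [local instance] Classical.propDecidable

theorem stmt9 {K : Type*} [TopologicalSpace K] [CompactSpace K] [T2Space K]
    (h : ∀ x : K, ∃ V : Set K, V ∈ nhds x ∧ IsClosed V ∧ HasExtensionProperty ↥V) :
    HasExtensionProperty K := by
  intro F _hFne hFcl
  haveI hFcs : CompactSpace ↥F := isCompact_iff_compactSpace.mp hFcl.isCompact
  choose V hVn hVc hVe using h
  have hcover : (Set.univ : Set K) ⊆ ⋃ x : K, interior (V x) := fun x _ =>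
    Set.mem_iUnion.mpr ⟨x, mem_interior_iff_mem_nhds.mpr (hVn x)⟩
  obtain ⟨t, ht⟩ := isCompact_univ.elim_finite_subcover (fun x => interior (V x))
    (fun _ => isOpen_interior) hcover
  obtain ⟨φ, hφ⟩ := PartitionOfUnity.exists_isSubordinate (ι := ↥t) (s := (Set.univ : Set K))
    isClosed_univ (fun i => interior (V (i : K))) (fun _ => isOpen_interior)
    (by
      intro x _
      rcases Set.mem_iUnion₂.mp (ht (Set.mem_univ x)) with ⟨i, hi, hx⟩
      exact Set.mem_iUnion.mpr ⟨⟨i, hi⟩, hx⟩)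
  have key : ∀ i : ↥t, ∃ T : C(↥F, ℝ) →L[ℝ] C(K, ℝ),
      ∀ (f : C(↥F, ℝ)) (x : ↥F), (T f) (x : K) = φ i (x : K) * f x := by
    intro i
    haveI hVcs : CompactSpace ↥(V (i : K)) := isCompact_iff_compactSpace.mp (hVc i).isCompact
    set S : Set ↥(V (i : K)) := Subtype.val ⁻¹' F with hSdef
    have hScl : IsClosed S := hFcl.preimage continuous_subtype_val
    haveI hScs : CompactSpace ↥S := isCompact_iff_compactSpace.mp hScl.isCompact
    by_cases hSne : S.Nonempty
    · obtain ⟨E, hE⟩ := hVe (i : K) S hSne hScl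
      set j : C(↥S, ↥F) := ⟨fun z => ⟨((z : ↥(V (i : K))) : K), z.2⟩,
        Continuous.subtype_mk (continuous_subtype_val.comp continuous_subtype_val) _⟩ with hjdef
      refine ⟨(mulExtendCLM (hVc i) (φ i) (hφ i)) ∘L E ∘L (compRightCLM j), ?_⟩
      intro f x
      show (if hh : (x : K) ∈ V (i : K)
          then φ i (x : K) * (E ((compRightCLM j) f)) ⟨(x : K), hh⟩ else 0)
        = φ i (x : K) * f x
      by_cases hh : (x : K) ∈ V (i : K)
      · rw [dif_pos hh]
        have hmem : (⟨(x : K), hh⟩ : ↥(V (i : K))) ∈ S := x.2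
        have h1 : E ((compRightCLM j) f) ⟨(x : K), hh⟩ = f x := by
          have h3 := congrFun (congrArg DFunLike.coe (hE ((compRightCLM j) f)))
            ⟨⟨(x : K), hh⟩, hmem⟩
          simp only [ContinuousMap.restrict_apply] at h3
          rw [h3]
          show f (j ⟨⟨(x : K), hh⟩, hmem⟩) = f x
          exact congrArg f (Subtype.ext rfl)
        rw [h1]
      · rw [dif_neg hh]
        have h0 : φ i (x : K) = 0 :=
          image_eq_zero_of_notMem_tsupport fun hx => hh (interior_subset (hφ i hx))
        rw [h0, zero_mul]
    · refine ⟨0, fun f x => ?_⟩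
      have hxV : (x : K) ∉ V (i : K) := fun hh => hSne ⟨⟨(x : K), hh⟩, x.2⟩
      have h0 : φ i (x : K) = 0 :=
        image_eq_zero_of_notMem_tsupport fun hx => hxV (interior_subset (hφ i hx))
      simp [h0]
  choose T hT using key
  refine ⟨∑ i : ↥t, T i, ?_⟩
  intro f
  ext x
  rw [ContinuousMap.restrict_apply]
  rw [ContinuousLinearMap.sum_apply, ContinuousMap.sum_apply]
  have hsum := φ.sum_eq_one (Set.mem_univ (x : K))
  rw [finsum_eq_sum_of_fintype] at hsum
  calc ∑ i : ↥t, (T i f) (x : K) = ∑ i : ↥t, φ i (x : K) * f x := by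
        exact Finset.sum_congr rfl fun i _ => hT i f x
    _ = (∑ i : ↥t, φ i (x : K)) * f x := by rw [Finset.sum_mul]
    _ = f x := by rw [hsum, one_mul]
end
end
end
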